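/- arXiv:1811.00437 — 3 statements merged into one kernel-verified Lean document; each statement's English description precedes it below -/
import Mathlib

section
/- Let F be twice continuously differentiable on (−1,1), let κ ≥ 0 and C₀ > 0, and assume F″(s) + a(x) ≥ C₀ for all s ∈ (−1,1) and a.e. x ∈ Ω. Set G′(s) := F′(s) + κs. Then for all φ, ψ ∈ L²(Ω) with φ(x) ∈ (−1,1) and ψ(x) ∈ (−1,1) a.e. and with F′∘φ, F′∘ψ ∈ L²(Ω): ∫_Ω (a·(φ−ψ) − J∗(φ−ψ) + G′(φ) − G′(ψ))·(φ−ψ) dx ≥ (C₀ + κ − ‖J‖_{L¹(ℝⁿ)})·‖φ−ψ‖²_{L²(Ω)}. In particular, if ‖J‖_{L¹(ℝⁿ)} ≤ C₀ + κ, the left-hand side is nonnegative. -/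
open MeasureTheory

private lemma aux_two_abs_mul_le (a b : ℝ) : 2 * |a * b| ≤ a ^ 2 + b ^ 2 := by
  have h := sq_nonneg (|a| - |b|)
  have h1 : |a * b| = |a| * |b| := abs_mul a b
  nlinarith [sq_abs a, sq_abs b, abs_nonneg a, abs_nonneg b]

private lemma aux_integrable_mul {α : Type*} [MeasurableSpace α] {μ : Measure α}
    {f g : α → ℝ} (hf : MemLp f 2 μ) (hg : MemLp g 2 μ) :
    Integrable (fun x => f x * g x) μ := by
  refine Integrable.mono' (hf.integrable_sq.add hg.integrable_sq)
    (hf.aestronglyMeasurable.mul hg.aestronglyMeasurable) ?_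
  filter_upwards with x
  have := aux_two_abs_mul_le (f x) (g x)
  have h2 : (0:ℝ) ≤ |f x * g x| := abs_nonneg _
  simp only [Real.norm_eq_abs, Pi.add_apply]
  linarith

private lemma aux_mvt_step {F' F'' : ℝ → ℝ}
    (hF'' : ∀ s ∈ Set.Ioo (-1:ℝ) 1, HasDerivAt F' (F'' s) s)
    {c C₀ : ℝ} (hc : ∀ s ∈ Set.Ioo (-1:ℝ) 1, C₀ ≤ F'' s + c)
    {p q : ℝ} (hp : p ∈ Set.Ioo (-1:ℝ) 1) (hq : q ∈ Set.Ioo (-1:ℝ) 1)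
    (hlt : q < p) :
    (C₀ - c) * (p - q) ^ 2 ≤ (F' p - F' q) * (p - q) := by
  have hsub : Set.Icc q p ⊆ Set.Ioo (-1:ℝ) 1 := fun x hx =>
    ⟨lt_of_lt_of_le hq.1 hx.1, lt_of_le_of_lt hx.2 hp.2⟩
  have hcont : ContinuousOn F' (Set.Icc q p) := fun x hx =>
    ((hF'' x (hsub hx)).continuousAt).continuousWithinAt
  obtain ⟨ξ, hξ, hslope⟩ := exists_hasDerivAt_eq_slope F' F'' hlt hcont
      (fun x hx => hF'' x (hsub (Set.Ioo_subset_Icc_self hx)))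
  have hξ1 : ξ ∈ Set.Ioo (-1:ℝ) 1 := hsub (Set.Ioo_subset_Icc_self hξ)
  have hne : p - q ≠ 0 := sub_ne_zero.2 (ne_of_gt hlt)
  have heq : F' p - F' q = F'' ξ * (p - q) := by
    rw [hslope]; field_simp
  have hge : C₀ - c ≤ F'' ξ := by have := hc ξ hξ1; linarith
  rw [heq]
  nlinarith [mul_le_mul_of_nonneg_right hge (sq_nonneg (p - q))]

private lemma aux_mvt {F' F'' : ℝ → ℝ}
    (hF'' : ∀ s ∈ Set.Ioo (-1:ℝ) 1, HasDerivAt F' (F'' s) s)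
    {c C₀ : ℝ} (hc : ∀ s ∈ Set.Ioo (-1:ℝ) 1, C₀ ≤ F'' s + c)
    {p q : ℝ} (hp : p ∈ Set.Ioo (-1:ℝ) 1) (hq : q ∈ Set.Ioo (-1:ℝ) 1) :
    (C₀ - c) * (p - q) ^ 2 ≤ (F' p - F' q) * (p - q) := by
  rcases lt_trichotomy q p with h | h | h
  · exact aux_mvt_step hF'' hc hp hq h
  · subst h; simp
  · have h2 := aux_mvt_step hF'' hc hq hp h
    have e1 : (F' q - F' p) * (q - p) = (F' p - F' q) * (p - q) := by ring
    have e2 : (q - p) ^ 2 = (p - q) ^ 2 := by ring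
    rw [e1, e2] at h2
    exact h2

set_option maxHeartbeats 2000000 in
/-- **Strong monotonicity of the subgradient (Claim (1) in Lemma 3.10).**
Let `F` be twice continuously differentiable on `(-1,1)`, `κ ≥ 0`, `C₀ > 0`,
and assume `F''(s) + a(x) ≥ C₀` for all `s ∈ (-1,1)` and a.e. `x ∈ Ω`, where
`a(x) = ∫_Ω J(x-y) dy`.  With `G'(s) = F'(s) + κ s`, for all
`φ, ψ ∈ L²(Ω)` taking values in `(-1,1)` a.e. with `F'∘φ, F'∘ψ ∈ L²(Ω)`:
`∫_Ω (a(φ-ψ) - J∗(φ-ψ) + G'(φ) - G'(ψ))(φ-ψ) dx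
   ≥ (C₀ + κ - ‖J‖_{L¹}) ‖φ-ψ‖²`,
and in particular the left-hand side is nonnegative if `‖J‖_{L¹} ≤ C₀ + κ`. -/
theorem subgradient_strong_monotonicity
    {n : ℕ} (Ω : Set (EuclideanSpace ℝ (Fin n)))
    (hΩmeas : MeasurableSet Ω) (hΩbdd : Bornology.IsBounded Ω)
    (hΩpos : 0 < volume Ω)
    (J : EuclideanSpace ℝ (Fin n) → ℝ)
    (hJint : Integrable J)
    (hJsymm : ∀ᵐ x ∂(volume : Measure (EuclideanSpace ℝ (Fin n))), J x = J (-x))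
    (F F' F'' : ℝ → ℝ) (κ C₀ : ℝ) (hκ : 0 ≤ κ) (hC₀ : 0 < C₀)
    (hF' : ∀ s ∈ Set.Ioo (-1 : ℝ) 1, HasDerivAt F (F' s) s)
    (hF'' : ∀ s ∈ Set.Ioo (-1 : ℝ) 1, HasDerivAt F' (F'' s) s)
    (hF''cont : ContinuousOn F'' (Set.Ioo (-1 : ℝ) 1))
    (hcoer : ∀ᵐ x ∂(volume.restrict Ω),
      ∀ s ∈ Set.Ioo (-1 : ℝ) 1, C₀ ≤ F'' s + (∫ y in Ω, J (x - y)))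
    (φ ψ : EuclideanSpace ℝ (Fin n) → ℝ)
    (hφ : MemLp φ 2 (volume.restrict Ω))
    (hψ : MemLp ψ 2 (volume.restrict Ω))
    (hφran : ∀ᵐ x ∂(volume.restrict Ω), φ x ∈ Set.Ioo (-1 : ℝ) 1)
    (hψran : ∀ᵐ x ∂(volume.restrict Ω), ψ x ∈ Set.Ioo (-1 : ℝ) 1)
    (hF'φ : MemLp (fun x => F' (φ x)) 2 (volume.restrict Ω))
    (hF'ψ : MemLp (fun x => F' (ψ x)) 2 (volume.restrict Ω)) :
    (C₀ + κ - ∫ x, |J x|) * (∫ x in Ω, (φ x - ψ x) ^ 2)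
      ≤ ∫ x in Ω,
          ((∫ y in Ω, J (x - y)) * (φ x - ψ x)
            - (∫ y in Ω, J (x - y) * (φ y - ψ y))
            + ((F' (φ x) + κ * φ x) - (F' (ψ x) + κ * ψ x))) * (φ x - ψ x)
    ∧ ((∫ x, |J x|) ≤ C₀ + κ →
        0 ≤ ∫ x in Ω,
          ((∫ y in Ω, J (x - y)) * (φ x - ψ x)
            - (∫ y in Ω, J (x - y) * (φ y - ψ y))
            + ((F' (φ x) + κ * φ x) - (F' (ψ x) + κ * ψ x))) * (φ x - ψ x)) := by
  classical
  obtain ⟨u, hu_def⟩ : ∃ u : EuclideanSpace ℝ (Fin n) → ℝ,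
      u = fun x => φ x - ψ x := ⟨_, rfl⟩
  obtain ⟨CJ, hCJ_def⟩ : ∃ c : ℝ, c = ∫ x, |J x| := ⟨_, rfl⟩
  obtain ⟨a, ha_def⟩ : ∃ a : EuclideanSpace ℝ (Fin n) → ℝ,
      a = fun x => ∫ y in Ω, J (x - y) := ⟨_, rfl⟩
  obtain ⟨conv, hconv_def⟩ : ∃ c : EuclideanSpace ℝ (Fin n) → ℝ,
      c = fun x => ∫ y in Ω, J (x - y) * u y := ⟨_, rfl⟩
  obtain ⟨Δ, hΔ_def⟩ : ∃ d : EuclideanSpace ℝ (Fin n) → ℝ,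
      d = fun x => (F' (φ x) + κ * φ x) - (F' (ψ x) + κ * ψ x) := ⟨_, rfl⟩
  have hu_app : ∀ x, φ x - ψ x = u x := fun x => by rw [hu_def]
  have ha_app : ∀ x, (∫ y in Ω, J (x - y)) = a x := fun x => by rw [ha_def]
  have hconv_app : ∀ x, (∫ y in Ω, J (x - y) * u y) = conv x := fun x => by rw [hconv_def]
  have hΔ_app : ∀ x, (F' (φ x) + κ * φ x) - (F' (ψ x) + κ * ψ x) = Δ x :=
    fun x => by rw [hΔ_def]
  simp only [ha_app] at hcoer
  simp only [← hCJ_def, hu_app, hΔ_app]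
  simp only [hconv_app, ha_app]
  have hu : MemLp u 2 (volume.restrict Ω) := by rw [hu_def]; exact hφ.sub hψ
  have hu2 : Integrable (fun x => u x ^ 2) (volume.restrict Ω) := hu.integrable_sq
  have huint : 0 ≤ ∫ x, u x ^ 2 ∂(volume.restrict Ω) := integral_nonneg fun x => sq_nonneg _
  have hCJ0 : (0:ℝ) ≤ CJ := hCJ_def ▸ integral_nonneg fun x => abs_nonneg _
  -- basic translate integrability and bounds
  have hJx : ∀ x : EuclideanSpace ℝ (Fin n), Integrable (fun y => |J (x - y)|) volume :=
    fun x => (hJint.comp_sub_left x).abs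
  have hJy : ∀ y : EuclideanSpace ℝ (Fin n), Integrable (fun x => |J (x - y)|) volume :=
    fun y => (hJint.comp_sub_right y).abs
  have hJxΩ : ∀ x, (∫ y in Ω, |J (x - y)|) ≤ CJ := by
    intro x
    rw [hCJ_def]
    have h1 : (∫ y in Ω, |J (x - y)|) ≤ ∫ y, |J (x - y)| :=
      setIntegral_le_integral (hJx x) (Filter.Eventually.of_forall fun y => abs_nonneg _)
    have h2 : (∫ y, |J (x - y)|) = ∫ x, |J x| :=
      integral_sub_left_eq_self (fun y => |J y|) volume x
    linarith
  have hJyΩ : ∀ y, (∫ x in Ω, |J (x - y)|) ≤ CJ := by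
    intro y
    rw [hCJ_def]
    have h1 : (∫ x in Ω, |J (x - y)|) ≤ ∫ x, |J (x - y)| :=
      setIntegral_le_integral (hJy y) (Filter.Eventually.of_forall fun x => abs_nonneg _)
    have h2 : (∫ x, |J (x - y)|) = ∫ x, |J x| :=
      integral_sub_right_eq_self (fun x => |J x|) y
    linarith
  have ha_bd : ∀ x, |a x| ≤ CJ := by
    intro x
    have h0 : |a x| ≤ ∫ y in Ω, |J (x - y)| := by
      rw [ha_def]
      simpa [Real.norm_eq_abs] using
        norm_integral_le_integral_norm (μ := volume.restrict Ω) (fun y => J (x - y))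
    exact le_trans h0 (hJxΩ x)
  -- measurability
  have hprod_ac : ((volume.restrict Ω).prod (volume.restrict Ω)) ≪
      ((volume : Measure (EuclideanSpace ℝ (Fin n))).prod volume) := by
    rw [Measure.prod_restrict]
    exact Measure.restrict_le_self.absolutelyContinuous
  have hJ2 : AEStronglyMeasurable
      (fun p : EuclideanSpace ℝ (Fin n) × EuclideanSpace ℝ (Fin n) => J (p.1 - p.2))
      ((volume.restrict Ω).prod (volume.restrict Ω)) :=
    (hJint.aestronglyMeasurable.comp_quasiMeasurePreserving
      (quasiMeasurePreserving_sub volume volume)).mono_ac hprod_ac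
  have humeas : AEStronglyMeasurable u (volume.restrict Ω) := hu.aestronglyMeasurable
  have ha_meas : AEStronglyMeasurable a (volume.restrict Ω) := by
    rw [ha_def]; exact hJ2.integral_prod_right'
  -- the two dominating functions on the product space
  have hD1 : Integrable
      (fun p : EuclideanSpace ℝ (Fin n) × EuclideanSpace ℝ (Fin n) =>
        |J (p.1 - p.2)| * u p.1 ^ 2) ((volume.restrict Ω).prod (volume.restrict Ω)) := by
    have hmeas : AEStronglyMeasurable
        (fun p : EuclideanSpace ℝ (Fin n) × EuclideanSpace ℝ (Fin n) =>
          |J (p.1 - p.2)| * u p.1 ^ 2) ((volume.restrict Ω).prod (volume.restrict Ω)) :=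
      (continuous_abs.comp_aestronglyMeasurable hJ2).mul (humeas.comp_fst.pow 2)
    rw [integrable_prod_iff hmeas]
    constructor
    · filter_upwards with x
      exact ((hJx x).restrict (s := Ω)).mul_const _
    · have hnorm : ∀ x, (∫ y, ‖|J (x - y)| * u x ^ 2‖ ∂(volume.restrict Ω))
          = (∫ y in Ω, |J (x - y)|) * u x ^ 2 := by
        intro x
        rw [← integral_mul_const]
        refine integral_congr_ae (Filter.Eventually.of_forall fun y => ?_)
        simp only [Real.norm_eq_abs]
        rw [abs_of_nonneg (by positivity)]
      refine Integrable.mono' (hu2.const_mul CJ) hmeas.norm.integral_prod_right' ?_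
      refine Filter.Eventually.of_forall fun x => ?_
      have hnn : 0 ≤ (∫ y in Ω, |J (x - y)|) :=
        integral_nonneg fun y => abs_nonneg _
      rw [Real.norm_eq_abs, hnorm x, abs_of_nonneg (mul_nonneg hnn (sq_nonneg _))]
      exact mul_le_mul_of_nonneg_right (hJxΩ x) (sq_nonneg _)
  have hD2 : Integrable
      (fun p : EuclideanSpace ℝ (Fin n) × EuclideanSpace ℝ (Fin n) =>
        |J (p.1 - p.2)| * u p.2 ^ 2) ((volume.restrict Ω).prod (volume.restrict Ω)) := by
    have hmeas : AEStronglyMeasurable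
        (fun p : EuclideanSpace ℝ (Fin n) × EuclideanSpace ℝ (Fin n) =>
          |J (p.1 - p.2)| * u p.2 ^ 2) ((volume.restrict Ω).prod (volume.restrict Ω)) :=
      (continuous_abs.comp_aestronglyMeasurable hJ2).mul (humeas.comp_snd.pow 2)
    rw [integrable_prod_iff' hmeas]
    constructor
    · filter_upwards with y
      exact ((hJy y).restrict (s := Ω)).mul_const _
    · have hnorm : ∀ y, (∫ x, ‖|J (x - y)| * u y ^ 2‖ ∂(volume.restrict Ω))
          = (∫ x in Ω, |J (x - y)|) * u y ^ 2 := by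
        intro y
        rw [← integral_mul_const]
        refine integral_congr_ae (Filter.Eventually.of_forall fun x => ?_)
        simp only [Real.norm_eq_abs]
        rw [abs_of_nonneg (by positivity)]
      refine Integrable.mono' (hu2.const_mul CJ) (hmeas.norm.prod_swap).integral_prod_right' ?_
      refine Filter.Eventually.of_forall fun y => ?_
      have hnn : 0 ≤ (∫ x in Ω, |J (x - y)|) :=
        integral_nonneg fun x => abs_nonneg _
      rw [Real.norm_eq_abs, hnorm y, abs_of_nonneg (mul_nonneg hnn (sq_nonneg _))]
      exact mul_le_mul_of_nonneg_right (hJyΩ y) (sq_nonneg _)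
  -- the convolution kernel is integrable on the product
  have hK : Integrable
      (fun p : EuclideanSpace ℝ (Fin n) × EuclideanSpace ℝ (Fin n) =>
        J (p.1 - p.2) * u p.2 * u p.1) ((volume.restrict Ω).prod (volume.restrict Ω)) := by
    refine Integrable.mono' (((hD1.add hD2)).div_const 2)
      ((hJ2.mul humeas.comp_snd).mul humeas.comp_fst) ?_
    refine Filter.Eventually.of_forall fun p => ?_
    have h1 : |J (p.1 - p.2) * u p.2 * u p.1|
        = |J (p.1 - p.2)| * |u p.2 * u p.1| := by
      rw [mul_assoc, abs_mul]
    have h2 := aux_two_abs_mul_le (u p.2) (u p.1)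
    have h3 : (0:ℝ) ≤ |J (p.1 - p.2)| := abs_nonneg _
    simp only [Real.norm_eq_abs, Pi.add_apply, h1]
    nlinarith [mul_le_mul_of_nonneg_left h2 h3]
  have hconvu : Integrable (fun x => conv x * u x) (volume.restrict Ω) := by
    refine (hK.integral_prod_left).congr ?_
    refine Filter.Eventually.of_forall fun x => ?_
    rw [hconv_def]
    exact integral_mul_const (u x) (fun y => J (x - y) * u y)
  -- quantitative bound on the convolution term
  have hID1 : (∫ p, |J (p.1 - p.2)| * u p.1 ^ 2 ∂((volume.restrict Ω).prod (volume.restrict Ω))) ≤ CJ * ∫ x, u x ^ 2 ∂(volume.restrict Ω) := by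
    have hfub := integral_integral (f := fun x y => |J (x - y)| * u x ^ 2) hD1
    rw [← hfub]
    have step : ∀ x, (∫ y, |J (x - y)| * u x ^ 2 ∂(volume.restrict Ω))
        = (∫ y in Ω, |J (x - y)|) * u x ^ 2 := fun x => integral_mul_const _ _
    calc (∫ x, ∫ y, |J (x - y)| * u x ^ 2 ∂(volume.restrict Ω) ∂(volume.restrict Ω))
        = ∫ x, (∫ y in Ω, |J (x - y)|) * u x ^ 2 ∂(volume.restrict Ω) := by
          exact integral_congr_ae (Filter.Eventually.of_forall step)
      _ ≤ ∫ x, CJ * u x ^ 2 ∂(volume.restrict Ω) := by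
          refine integral_mono_of_nonneg ?_ (hu2.const_mul CJ) ?_
          · exact Filter.Eventually.of_forall fun x =>
              mul_nonneg (integral_nonneg fun y => abs_nonneg _) (sq_nonneg _)
          · exact Filter.Eventually.of_forall fun x =>
              mul_le_mul_of_nonneg_right (hJxΩ x) (sq_nonneg _)
      _ = CJ * ∫ x, u x ^ 2 ∂(volume.restrict Ω) := integral_const_mul _ _
  have hID2 : (∫ p, |J (p.1 - p.2)| * u p.2 ^ 2 ∂((volume.restrict Ω).prod (volume.restrict Ω))) ≤ CJ * ∫ x, u x ^ 2 ∂(volume.restrict Ω) := by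
    have hfub := integral_integral (f := fun x y => |J (x - y)| * u y ^ 2) hD2
    have hswap := integral_integral_swap (f := fun x y => |J (x - y)| * u y ^ 2) hD2
    rw [← hfub, hswap]
    have step : ∀ y, (∫ x, |J (x - y)| * u y ^ 2 ∂(volume.restrict Ω))
        = (∫ x in Ω, |J (x - y)|) * u y ^ 2 := fun y => integral_mul_const _ _
    calc (∫ y, ∫ x, |J (x - y)| * u y ^ 2 ∂(volume.restrict Ω) ∂(volume.restrict Ω))
        = ∫ y, (∫ x in Ω, |J (x - y)|) * u y ^ 2 ∂(volume.restrict Ω) := by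
          exact integral_congr_ae (Filter.Eventually.of_forall step)
      _ ≤ ∫ y, CJ * u y ^ 2 ∂(volume.restrict Ω) := by
          refine integral_mono_of_nonneg ?_ (hu2.const_mul CJ) ?_
          · exact Filter.Eventually.of_forall fun y =>
              mul_nonneg (integral_nonneg fun x => abs_nonneg _) (sq_nonneg _)
          · exact Filter.Eventually.of_forall fun y =>
              mul_le_mul_of_nonneg_right (hJyΩ y) (sq_nonneg _)
      _ = CJ * ∫ y, u y ^ 2 ∂(volume.restrict Ω) := integral_const_mul _ _
  have hIbound : |∫ x, conv x * u x ∂(volume.restrict Ω)| ≤ CJ * ∫ x, u x ^ 2 ∂(volume.restrict Ω) := by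
    have hIeq : (∫ x, conv x * u x ∂(volume.restrict Ω))
        = ∫ x, ∫ y, J (x - y) * u y * u x ∂(volume.restrict Ω) ∂(volume.restrict Ω) := by
      refine integral_congr_ae (Filter.Eventually.of_forall fun x => ?_)
      rw [hconv_def]
      exact (integral_mul_const (u x) (fun y => J (x - y) * u y)).symm
    rw [hIeq]
    have s1 : |∫ x, ∫ y, J (x - y) * u y * u x ∂(volume.restrict Ω) ∂(volume.restrict Ω)|
        ≤ ∫ x, ‖∫ y, J (x - y) * u y * u x ∂(volume.restrict Ω)‖ ∂(volume.restrict Ω) := by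
      simpa [Real.norm_eq_abs] using
        norm_integral_le_integral_norm (μ := volume.restrict Ω)
          (fun x => ∫ y, J (x - y) * u y * u x ∂(volume.restrict Ω))
    have s2 : (∫ x, ‖∫ y, J (x - y) * u y * u x ∂(volume.restrict Ω)‖ ∂(volume.restrict Ω))
        ≤ ∫ x, ∫ y, ‖J (x - y) * u y * u x‖ ∂(volume.restrict Ω) ∂(volume.restrict Ω) := by
      refine integral_mono_of_nonneg
        (Filter.Eventually.of_forall fun x => norm_nonneg _)
        hK.integral_norm_prod_left ?_
      exact Filter.Eventually.of_forall fun x =>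
        norm_integral_le_integral_norm _
    have s3 : (∫ x, ∫ y, ‖J (x - y) * u y * u x‖ ∂(volume.restrict Ω) ∂(volume.restrict Ω))
        = ∫ p, ‖J (p.1 - p.2) * u p.2 * u p.1‖ ∂((volume.restrict Ω).prod (volume.restrict Ω)) :=
      integral_integral (f := fun x y => ‖J (x - y) * u y * u x‖) hK.norm
    have s4 : (∫ p, ‖J (p.1 - p.2) * u p.2 * u p.1‖ ∂((volume.restrict Ω).prod (volume.restrict Ω)))
        ≤ ∫ p, (|J (p.1 - p.2)| * u p.1 ^ 2 + |J (p.1 - p.2)| * u p.2 ^ 2) / 2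
            ∂((volume.restrict Ω).prod (volume.restrict Ω)) := by
      refine integral_mono hK.norm ((hD1.add hD2).div_const 2) ?_
      intro p
      have h1 : |J (p.1 - p.2) * u p.2 * u p.1|
          = |J (p.1 - p.2)| * |u p.2 * u p.1| := by rw [mul_assoc, abs_mul]
      have h2 := aux_two_abs_mul_le (u p.2) (u p.1)
      have h3 : (0:ℝ) ≤ |J (p.1 - p.2)| := abs_nonneg _
      simp only [Real.norm_eq_abs, h1]
      nlinarith [mul_le_mul_of_nonneg_left h2 h3]
    have s5 : (∫ p, (|J (p.1 - p.2)| * u p.1 ^ 2 + |J (p.1 - p.2)| * u p.2 ^ 2) / 2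
            ∂((volume.restrict Ω).prod (volume.restrict Ω)))
        = ((∫ p, |J (p.1 - p.2)| * u p.1 ^ 2 ∂((volume.restrict Ω).prod (volume.restrict Ω)))
            + ∫ p, |J (p.1 - p.2)| * u p.2 ^ 2 ∂((volume.restrict Ω).prod (volume.restrict Ω))) / 2 := by
      rw [integral_div, integral_add hD1 hD2]
    linarith
  -- integrability of the main integrand pieces
  have hau2 : Integrable (fun x => a x * u x ^ 2) (volume.restrict Ω) := by
    refine hu2.bdd_mul (c := CJ) ha_meas ?_
    exact Filter.Eventually.of_forall fun x => by
      simpa [Real.norm_eq_abs] using ha_bd x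
  have hΔmem : MemLp Δ 2 (volume.restrict Ω) := by
    rw [hΔ_def]
    have he : (((fun x => F' (φ x)) + fun x => κ * φ x)
          - ((fun x => F' (ψ x)) + fun x => κ * ψ x))
        = fun x => (F' (φ x) + κ * φ x) - (F' (ψ x) + κ * ψ x) := by
      funext x; simp [Pi.add_apply, Pi.sub_apply]
    rw [← he]
    exact (hF'φ.add (hφ.const_mul κ)).sub (hF'ψ.add (hψ.const_mul κ))
  have hΔu : Integrable (fun x => Δ x * u x) (volume.restrict Ω) := aux_integrable_mul hΔmem hu
  have hg1 : Integrable (fun x => a x * u x ^ 2 + Δ x * u x) (volume.restrict Ω) := hau2.add hΔu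
  -- pointwise a.e. convexity estimate
  have hae : ∀ᵐ x ∂(volume.restrict Ω), (C₀ + κ) * u x ^ 2 ≤ a x * u x ^ 2 + Δ x * u x := by
    filter_upwards [hcoer, hφran, hψran] with x hx hφx hψx
    have hm := aux_mvt hF'' (c := a x) hx hφx hψx
    have hΔeq : Δ x * u x
        = (F' (φ x) - F' (ψ x)) * (φ x - ψ x) + κ * (φ x - ψ x) ^ 2 := by
      rw [hΔ_def, hu_def]; ring
    have huu : u x ^ 2 = (φ x - ψ x) ^ 2 := by rw [hu_def]
    rw [hΔeq, huu]
    nlinarith [hm]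
  have h1 : (C₀ + κ) * (∫ x, u x ^ 2 ∂(volume.restrict Ω)) ≤ ∫ x, (a x * u x ^ 2 + Δ x * u x) ∂(volume.restrict Ω) := by
    calc (C₀ + κ) * (∫ x, u x ^ 2 ∂(volume.restrict Ω))
        = ∫ x, (C₀ + κ) * u x ^ 2 ∂(volume.restrict Ω) := (integral_const_mul _ _).symm
      _ ≤ _ := integral_mono_ae (hu2.const_mul _) hg1 hae
  -- assemble
  have hint : Integrable (fun x => (a x * u x - conv x + Δ x) * u x) (volume.restrict Ω) := by
    have e : (fun x => (a x * u x - conv x + Δ x) * u x)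
        = fun x => (a x * u x ^ 2 + Δ x * u x) - conv x * u x := by
      funext x; ring
    rw [e]; exact hg1.sub hconvu
  have e2 : (∫ x, (a x * u x - conv x + Δ x) * u x ∂(volume.restrict Ω))
      = (∫ x, (a x * u x ^ 2 + Δ x * u x) ∂(volume.restrict Ω)) - ∫ x, conv x * u x ∂(volume.restrict Ω) := by
    rw [← integral_sub hg1 hconvu]
    refine integral_congr_ae (Filter.Eventually.of_forall fun x => ?_)
    ring
  have key : (C₀ + κ - CJ) * (∫ x, u x ^ 2 ∂(volume.restrict Ω))
      ≤ ∫ x, (a x * u x - conv x + Δ x) * u x ∂(volume.restrict Ω) := by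
    have h2 := (abs_le.mp hIbound).2
    rw [e2]
    nlinarith [h1, h2]
  refine ⟨key, fun hJle => le_trans (mul_nonneg (by linarith) huint) key⟩
end

section
/- Let G : ℝ → [0,∞] be lower semicontinuous. Then the functional f : L²(Ω) → (−∞,∞] defined by f(φ) := (1/4)∫_Ω∫_Ω J(x−y)(φ(x)−φ(y))² dx dy + ∫_Ω G(φ(x)) dx is sequentially lower semicontinuous with respect to the L²(Ω) norm: whenever φ_k → φ in L²(Ω), one has f(φ) ≤ liminf_{k→∞} f(φ_k). -/
open MeasureTheory Filter ENNReal NNReal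

/-- The free energy functional
`f(φ) = (1/4)∫_Ω∫_Ω J(x-y)(φ(x)-φ(y))² dx dy + ∫_Ω G(φ(x)) dx`,
with values in `(-∞, ∞]` (the potential term `G` takes values in `[0,∞]`). -/
noncomputable def freeEnergy {n : ℕ} (Ω : Set (EuclideanSpace ℝ (Fin n)))
    (J : EuclideanSpace ℝ (Fin n) → ℝ) (G : ℝ → ENNReal)
    (φ : EuclideanSpace ℝ (Fin n) → ℝ) : EReal :=
  (((1 / 4 : ℝ) * ∫ x in Ω, ∫ y in Ω, J (x - y) * (φ x - φ y) ^ 2 : ℝ) : EReal)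
    + ((∫⁻ x in Ω, G (φ x) : ENNReal) : EReal)


lemma sq_add_le' (a b : ℝ≥0∞) : (a + b) ^ (2:ℝ) ≤ 2 * a ^ (2:ℝ) + 2 * b ^ (2:ℝ) := by
  have h2 : ((2:ℕ) : ℝ) = (2:ℝ) := by norm_num
  rw [← h2, ENNReal.rpow_natCast, ENNReal.rpow_natCast, ENNReal.rpow_natCast]
  rcases eq_or_ne a ⊤ with rfl | ha
  · simp [ENNReal.top_pow, ENNReal.mul_top]
  rcases eq_or_ne b ⊤ with rfl | hb
  · simp [ENNReal.top_pow, ENNReal.mul_top]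
  lift a to ℝ≥0 using ha
  lift b to ℝ≥0 using hb
  rw [← ENNReal.coe_add, ← ENNReal.coe_pow, ← ENNReal.coe_pow, ← ENNReal.coe_pow]
  rw [show ((2:ℝ≥0∞)) = ((2:ℝ≥0) : ℝ≥0∞) by norm_num, ← ENNReal.coe_mul, ← ENNReal.coe_mul,
    ← ENNReal.coe_add, ENNReal.coe_le_coe, ← NNReal.coe_le_coe]
  push_cast
  nlinarith [sq_nonneg ((a:ℝ) - (b:ℝ))]

lemma holder2 {α : Type*} [MeasurableSpace α] (μ : Measure α) {f g : α → ℝ≥0∞}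
    (hf : AEMeasurable f μ) (hg : AEMeasurable g μ) :
    ∫⁻ a, f a * g a ∂μ ≤ (∫⁻ a, f a ^ (2:ℝ) ∂μ) ^ (1/2:ℝ) * (∫⁻ a, g a ^ (2:ℝ) ∂μ) ^ (1/2:ℝ) :=
  ENNReal.lintegral_mul_le_Lp_mul_Lq μ ⟨by norm_num, by norm_num, by norm_num⟩ hf hg

lemma lsc_le_liminf {G : ℝ → ℝ≥0∞} (hG : LowerSemicontinuous G) {ψ : ℕ → ℝ} {a : ℝ}
    (h : Tendsto ψ atTop (nhds a)) : G a ≤ liminf (fun m => G (ψ m)) atTop := by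
  rw [le_liminf_iff]
  intro y hy
  exact h.eventually (hG a y hy)

lemma coe_ennreal_le_liminf {b : ℝ≥0∞} {u : ℕ → ℝ≥0∞} (h : b ≤ liminf u atTop) :
    (b : EReal) ≤ liminf (fun k => (u k : EReal)) atTop := by
  rw [le_liminf_iff]
  intro y hy
  rcases lt_or_ge y 0 with h0 | h0
  · exact Eventually.of_forall fun k => h0.trans_le (EReal.coe_ennreal_nonneg _)
  · have hytop : y ≠ ⊤ := (hy.trans_le (le_top)).ne
    obtain ⟨c, rfl⟩ : ∃ c : ℝ≥0∞, (c : EReal) = y := by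
      induction y with
      | bot => exact ⟨0, absurd h0 (by simp)⟩
      | coe r => exact ⟨ENNReal.ofReal r, by
          rw [EReal.coe_ennreal_ofReal, max_eq_left (EReal.coe_nonneg.mp h0)]⟩
      | top => exact absurd rfl hytop
    have hcb : c < b := EReal.coe_ennreal_lt_coe_ennreal_iff.mp hy
    have := Filter.eventually_lt_of_lt_liminf (hcb.trans_le h)
    exact this.mono fun k hk => EReal.coe_ennreal_lt_coe_ennreal_iff.mpr hk

section aux
variable {n : ℕ}
local notation "E" => EuclideanSpace ℝ (Fin n)

-- measure preserving x ↦ x - y and y ↦ x - y on volume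
lemma mp_sub_right (y : E) : MeasurePreserving (fun x : E => x - y) volume volume := by
  have : (fun x : E => x - y) = fun x : E => x + (-y) := by funext x; rw [sub_eq_add_neg]
  rw [this]
  exact measurePreserving_add_right volume (-y)

lemma mp_sub_left (x : E) : MeasurePreserving (fun y : E => x - y) volume volume := by
  have : (fun y : E => x - y) = (fun y : E => y + x) ∘ (fun y : E => -y) := by
    funext y; simp [sub_eq_add_neg, add_comm]
  rw [this]
  exact (measurePreserving_add_right volume x).comp (Measure.measurePreserving_neg volume)

lemma rpow_two_eq (x : ℝ≥0∞) : x ^ (2:ℝ) = x ^ (2:ℕ) := by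
  rw [show (2:ℝ) = ((2:ℕ):ℝ) by norm_num, ENNReal.rpow_natCast]

lemma half_sq (x y : ℝ≥0∞) : (x ^ (1/2:ℝ) * y) ^ (2:ℝ) = x * y ^ (2:ℕ) := by
  rw [ENNReal.mul_rpow_of_nonneg _ _ (by norm_num : (0:ℝ) ≤ 2), ← ENNReal.rpow_mul,
    show (1/2:ℝ) * 2 = 1 by norm_num, ENNReal.rpow_one, rpow_two_eq]

lemma sq_add_le2 (a b : ℝ≥0∞) : (a + b) ^ (2:ℕ) ≤ 2 * a ^ (2:ℕ) + 2 * b ^ (2:ℕ) := by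
  have := sq_add_le' a b
  rwa [rpow_two_eq, rpow_two_eq, rpow_two_eq] at this

lemma nnnorm_norm_add_norm (a b : ℝ) : ‖(‖a‖ + ‖b‖)‖₊ = ‖a‖₊ + ‖b‖₊ := by
  ext
  push_cast
  rw [Real.norm_of_nonneg (by positivity)]

lemma qmp_sub_prod (μ : Measure E) [SFinite μ] (hμ : μ ≪ volume) :
    Measure.QuasiMeasurePreserving (fun p : E × E => p.1 - p.2) (μ.prod μ) volume := by
  have h1 : Measure.QuasiMeasurePreserving (fun p : E × E => p.1 - p.2)
      ((volume : Measure E).prod volume) volume :=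
    (Measure.quasiMeasurePreserving_fst).comp
      (measurePreserving_sub_prod (volume : Measure E) volume).quasiMeasurePreserving
  refine ⟨measurable_fst.sub measurable_snd, ?_⟩
  have hprod : μ.prod μ ≪ (volume : Measure E).prod volume :=
    Measure.AbsolutelyContinuous.prod hμ hμ
  exact (hprod.map (measurable_fst.sub measurable_snd)).trans h1.absolutelyContinuous

end aux

section test
variable {n : ℕ}
local notation "E" => EuclideanSpace ℝ (Fin n)

lemma freeEnergy_key (Ω : Set E) (J : E → ℝ) (hJsm : StronglyMeasurable J)
    (hJint : Integrable J) (G : ℝ → ENNReal) (hG : LowerSemicontinuous G)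
    (φ : E → ℝ) (φk : ℕ → E → ℝ) (hφ : MemLp φ 2 (volume.restrict Ω))
    (hφk : ∀ k, MemLp (φk k) 2 (volume.restrict Ω))
    (hconv : Tendsto (fun k => ∫ x in Ω, (φk k x - φ x) ^ 2) atTop (nhds 0)) :
    freeEnergy Ω J G φ ≤ liminf (fun k => freeEnergy Ω J G (φk k)) atTop := by
  set μ : Measure E := volume.restrict Ω with hμdef
  have hμac : μ ≪ (volume : Measure E) := Measure.restrict_le_self.absolutelyContinuous
  set π : Measure (E × E) := μ.prod μ with hπdef
  set K : ℝ≥0∞ := ∫⁻ z, ‖J z‖₊ ∂(volume : Measure E) with hKdef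
  have hK : K ≠ ⊤ := hJint.2.ne
  -- S
  set S : (E → ℝ) → ℝ≥0∞ := fun ψ => ∫⁻ x, (‖ψ x‖₊ : ℝ≥0∞) ^ (2:ℝ) ∂μ with hSdef
  have hS_ne_top : ∀ ψ : E → ℝ, MemLp ψ 2 μ → S ψ ≠ ⊤ := by
    intro ψ hψ
    have h := hψ.2
    rw [eLpNorm_eq_lintegral_rpow_enorm_toReal (by norm_num) (by norm_num)] at h
    simp only [ENNReal.toReal_ofNat, enorm_eq_nnnorm] at h
    intro htop
    rw [hSdef] at htop
    simp only [htop] at h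
    rw [ENNReal.top_rpow_of_pos (by norm_num)] at h
    exact (lt_irrefl _ h).elim
  -- kernel bounds
  have hker1 : ∀ x : E, ∫⁻ y, (‖J (x - y)‖₊ : ℝ≥0∞) ∂μ ≤ K := by
    intro x
    calc ∫⁻ y, (‖J (x - y)‖₊ : ℝ≥0∞) ∂μ ≤ ∫⁻ y, (‖J (x - y)‖₊ : ℝ≥0∞) ∂(volume : Measure E) :=
          lintegral_mono' Measure.restrict_le_self le_rfl
      _ = K := (mp_sub_left (n := n) x).lintegral_comp hJsm.measurable.enorm
  have hker2 : ∀ y : E, ∫⁻ x, (‖J (x - y)‖₊ : ℝ≥0∞) ∂μ ≤ K := by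
    intro y
    calc ∫⁻ x, (‖J (x - y)‖₊ : ℝ≥0∞) ∂μ ≤ ∫⁻ x, (‖J (x - y)‖₊ : ℝ≥0∞) ∂(volume : Measure E) :=
          lintegral_mono' Measure.restrict_le_self le_rfl
      _ = K := (mp_sub_right (n := n) y).lintegral_comp hJsm.measurable.enorm
  have hmeasJ : Measurable fun p : E × E => (‖J (p.1 - p.2)‖₊ : ℝ≥0∞) :=
    (hJsm.measurable.comp (measurable_fst.sub measurable_snd)).enorm
  have hTon1 : ∀ f : E → ℝ≥0∞, AEMeasurable f μ → (∀ x, f x ≠ ⊤) →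
      ∫⁻ p : E × E, (‖J (p.1 - p.2)‖₊ : ℝ≥0∞) * f p.1 ∂π ≤ K * ∫⁻ x, f x ∂μ := by
    intro f hf hftop
    have hf1 : AEMeasurable (fun p : E × E => f p.1) π :=
      hf.comp_quasiMeasurePreserving Measure.quasiMeasurePreserving_fst
    rw [hπdef, lintegral_prod (fun p : E × E => (‖J (p.1 - p.2)‖₊ : ℝ≥0∞) * f p.1) (hmeasJ.aemeasurable.mul hf1)]
    calc ∫⁻ x, ∫⁻ y, (‖J (x - y)‖₊ : ℝ≥0∞) * f x ∂μ ∂μ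
        = ∫⁻ x, (∫⁻ y, (‖J (x - y)‖₊ : ℝ≥0∞) ∂μ) * f x ∂μ :=
          lintegral_congr fun x => lintegral_mul_const' (f x) _ (hftop x)
      _ ≤ ∫⁻ x, K * f x ∂μ := lintegral_mono fun x => mul_le_mul_left (hker1 x) _
      _ = K * ∫⁻ x, f x ∂μ := lintegral_const_mul' K f hK
  have hTon2 : ∀ f : E → ℝ≥0∞, AEMeasurable f μ → (∀ x, f x ≠ ⊤) →
      ∫⁻ p : E × E, (‖J (p.1 - p.2)‖₊ : ℝ≥0∞) * f p.2 ∂π ≤ K * ∫⁻ x, f x ∂μ := by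
    intro f hf hftop
    have hf2 : AEMeasurable (fun p : E × E => f p.2) π :=
      hf.comp_quasiMeasurePreserving Measure.quasiMeasurePreserving_snd
    rw [hπdef, lintegral_prod_symm (fun p : E × E => (‖J (p.1 - p.2)‖₊ : ℝ≥0∞) * f p.2) (hmeasJ.aemeasurable.mul hf2)]
    calc ∫⁻ y, ∫⁻ x, (‖J (x - y)‖₊ : ℝ≥0∞) * f y ∂μ ∂μ
        = ∫⁻ y, (∫⁻ x, (‖J (x - y)‖₊ : ℝ≥0∞) ∂μ) * f y ∂μ :=
          lintegral_congr fun y => lintegral_mul_const' (f y) _ (hftop y)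
      _ ≤ ∫⁻ y, K * f y ∂μ := lintegral_mono fun y => mul_le_mul_left (hker2 y) _
      _ = K * ∫⁻ y, f y ∂μ := lintegral_const_mul' K f hK
  have hS_pow : ∀ ψ : E → ℝ, S ψ = ∫⁻ x, (‖ψ x‖₊ : ℝ≥0∞) ^ (2:ℕ) ∂μ := fun ψ =>
    lintegral_congr fun x => rpow_two_eq _
  -- W bound
  have hWbound : ∀ g : E → ℝ, AEMeasurable g μ →
      ∫⁻ p : E × E, (‖J (p.1 - p.2)‖₊ : ℝ≥0∞) * ((‖g p.1‖₊ : ℝ≥0∞) + (‖g p.2‖₊ : ℝ≥0∞)) ^ (2:ℕ) ∂π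
        ≤ 4 * K * S g := by
    intro g hg
    have h1 : AEMeasurable (fun p : E × E => (‖g p.1‖₊ : ℝ≥0∞) ^ (2:ℕ)) π :=
      ((hg.comp_quasiMeasurePreserving Measure.quasiMeasurePreserving_fst).enorm).pow_const 2
    calc ∫⁻ p : E × E, (‖J (p.1 - p.2)‖₊ : ℝ≥0∞) * ((‖g p.1‖₊ : ℝ≥0∞) + (‖g p.2‖₊ : ℝ≥0∞)) ^ (2:ℕ) ∂π
        ≤ ∫⁻ p : E × E, (‖J (p.1 - p.2)‖₊ : ℝ≥0∞) * ((‖g p.1‖₊ : ℝ≥0∞) ^ (2:ℕ) * 2)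
            + (‖J (p.1 - p.2)‖₊ : ℝ≥0∞) * ((‖g p.2‖₊ : ℝ≥0∞) ^ (2:ℕ) * 2) ∂π := by
          apply lintegral_mono fun p => ?_
          rw [← mul_add]
          refine mul_le_mul_right ?_ _
          calc ((‖g p.1‖₊ : ℝ≥0∞) + (‖g p.2‖₊ : ℝ≥0∞)) ^ (2:ℕ)
              ≤ 2 * (‖g p.1‖₊ : ℝ≥0∞) ^ (2:ℕ) + 2 * (‖g p.2‖₊ : ℝ≥0∞) ^ (2:ℕ) := sq_add_le2 _ _
            _ = (‖g p.1‖₊ : ℝ≥0∞) ^ (2:ℕ) * 2 + (‖g p.2‖₊ : ℝ≥0∞) ^ (2:ℕ) * 2 := by ring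
      _ = (∫⁻ p : E × E, (‖J (p.1 - p.2)‖₊ : ℝ≥0∞) * ((‖g p.1‖₊ : ℝ≥0∞) ^ (2:ℕ) * 2) ∂π)
            + ∫⁻ p : E × E, (‖J (p.1 - p.2)‖₊ : ℝ≥0∞) * ((‖g p.2‖₊ : ℝ≥0∞) ^ (2:ℕ) * 2) ∂π :=
          lintegral_add_left' (hmeasJ.aemeasurable.mul (h1.mul_const 2)) _
      _ ≤ K * (∫⁻ x, (‖g x‖₊ : ℝ≥0∞) ^ (2:ℕ) * 2 ∂μ) + K * (∫⁻ x, (‖g x‖₊ : ℝ≥0∞) ^ (2:ℕ) * 2 ∂μ) := by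
          gcongr ?_ + ?_
          · exact hTon1 _ ((hg.enorm.pow_const 2).mul_const 2)
              (fun x => by simp [ENNReal.mul_eq_top])
          · exact hTon2 _ ((hg.enorm.pow_const 2).mul_const 2)
              (fun x => by simp [ENNReal.mul_eq_top])
      _ = 4 * K * S g := by
          rw [hS_pow g, lintegral_mul_const' 2 _ (by norm_num)]
          ring
  -- triangle for S
  have hS_tri : ∀ f g : E → ℝ, AEMeasurable f μ → S (fun x => f x + g x) ≤ 2 * S f + 2 * S g := by
    intro f g hf
    rw [hS_pow, hS_pow, hS_pow]
    calc ∫⁻ x, (‖f x + g x‖₊ : ℝ≥0∞) ^ (2:ℕ) ∂μ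
        ≤ ∫⁻ x, (2 * (‖f x‖₊ : ℝ≥0∞) ^ (2:ℕ) + 2 * (‖g x‖₊ : ℝ≥0∞) ^ (2:ℕ)) ∂μ := by
          apply lintegral_mono fun x => ?_
          refine le_trans (pow_le_pow_left' ?_ 2) (sq_add_le2 _ _)
          rw [← ENNReal.coe_add]
          exact ENNReal.coe_le_coe.mpr (nnnorm_add_le _ _)
      _ = 2 * ∫⁻ x, (‖f x‖₊ : ℝ≥0∞) ^ (2:ℕ) ∂μ + 2 * ∫⁻ x, (‖g x‖₊ : ℝ≥0∞) ^ (2:ℕ) ∂μ := by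
          rw [← lintegral_const_mul' 2 _ (by norm_num), ← lintegral_const_mul' 2 _ (by norm_num)]
          exact lintegral_add_left' ((hf.enorm.pow_const 2).const_mul 2) _
  -- measurability of the product integrand
  have haesm : ∀ ψ : E → ℝ, MemLp ψ 2 μ →
      AEStronglyMeasurable (fun p : E × E => J (p.1 - p.2) * (ψ p.1 - ψ p.2) ^ 2) π := by
    intro ψ hψ
    have hJp : AEStronglyMeasurable (fun p : E × E => J (p.1 - p.2)) π :=
      (hJsm.comp_measurable (measurable_fst.sub measurable_snd)).aestronglyMeasurable
    have h1 : AEStronglyMeasurable (fun p : E × E => ψ p.1) π :=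
      hψ.1.comp_quasiMeasurePreserving Measure.quasiMeasurePreserving_fst
    have h2 : AEStronglyMeasurable (fun p : E × E => ψ p.2) π :=
      hψ.1.comp_quasiMeasurePreserving Measure.quasiMeasurePreserving_snd
    exact hJp.mul ((h1.sub h2).pow 2)
  -- enorm of the integrand
  have henorm : ∀ (c : ℝ) (u : ℝ), (‖c * u ^ 2‖₊ : ℝ≥0∞) = (‖c‖₊ : ℝ≥0∞) * (‖u‖₊ : ℝ≥0∞) ^ (2:ℕ) := by
    intro c u
    rw [nnnorm_mul, nnnorm_pow, ENNReal.coe_mul, ENNReal.coe_pow]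
  -- integrability on the product
  have hFint : ∀ ψ : E → ℝ, MemLp ψ 2 μ →
      Integrable (fun p : E × E => J (p.1 - p.2) * (ψ p.1 - ψ p.2) ^ 2) π := by
    intro ψ hψ
    refine ⟨haesm ψ hψ, ?_⟩
    have hb : ∫⁻ p : E × E, (‖J (p.1 - p.2) * (ψ p.1 - ψ p.2) ^ 2‖₊ : ℝ≥0∞) ∂π
        ≤ 4 * K * S ψ := by
      refine le_trans (lintegral_mono fun p => ?_) (hWbound ψ hψ.1.aemeasurable)
      rw [henorm]
      refine mul_le_mul_right (pow_le_pow_left' ?_ 2) _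
      rw [← ENNReal.coe_add]
      exact ENNReal.coe_le_coe.mpr (nnnorm_sub_le _ _)
    exact lt_of_le_of_lt hb (by
      refine ENNReal.mul_lt_top (ENNReal.mul_ne_top (by norm_num) hK).lt_top ?_
      exact lt_of_le_of_lt (le_of_eq rfl) (lt_top_iff_ne_top.mpr (hS_ne_top ψ hψ)))
  set A : (E → ℝ) → ℝ := fun ψ => ∫ p : E × E, J (p.1 - p.2) * (ψ p.1 - ψ p.2) ^ 2 ∂π with hAdef
  have hS_norm : ∀ ψ : E → ℝ, S (fun x => ‖ψ x‖) = S ψ := by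
    intro ψ
    rw [hS_pow, hS_pow]
    exact lintegral_congr fun x => by rw [nnnorm_norm]
  have hEst : ∀ ψ₁ ψ₂ : E → ℝ, MemLp ψ₁ 2 μ → MemLp ψ₂ 2 μ →
      |A ψ₁ - A ψ₂| ≤ (((4 * K * S (fun x => ψ₁ x - ψ₂ x)) ^ (1/2:ℝ)) *
        ((4 * K * (2 * S ψ₁ + 2 * S ψ₂)) ^ (1/2:ℝ))).toReal := by
    intro ψ₁ ψ₂ h₁ h₂
    set δ : E → ℝ := fun x => ψ₁ x - ψ₂ x with hδdef
    set τ : E → ℝ := fun x => ‖ψ₁ x‖ + ‖ψ₂ x‖ with hτdef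
    have hδm : AEMeasurable δ μ := (h₁.1.sub h₂.1).aemeasurable
    have hτm : AEMeasurable τ μ := (h₁.1.norm.add h₂.1.norm).aemeasurable
    have hδ2 : MemLp δ 2 μ := h₁.sub h₂
    -- the two Hölder factors
    set f : E × E → ℝ≥0∞ := fun p =>
      (‖J (p.1 - p.2)‖₊ : ℝ≥0∞) ^ (1/2:ℝ) * ((‖δ p.1‖₊ : ℝ≥0∞) + (‖δ p.2‖₊ : ℝ≥0∞)) with hfdef
    set g : E × E → ℝ≥0∞ := fun p =>
      (‖J (p.1 - p.2)‖₊ : ℝ≥0∞) ^ (1/2:ℝ) * ((‖τ p.1‖₊ : ℝ≥0∞) + (‖τ p.2‖₊ : ℝ≥0∞)) with hgdef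
    have hWhalf : Measurable fun p : E × E => (‖J (p.1 - p.2)‖₊ : ℝ≥0∞) ^ (1/2:ℝ) :=
      ENNReal.continuous_rpow_const.measurable.comp hmeasJ
    have hfm : AEMeasurable f π := hWhalf.aemeasurable.mul
      (((hδm.comp_quasiMeasurePreserving Measure.quasiMeasurePreserving_fst).enorm).add
        ((hδm.comp_quasiMeasurePreserving Measure.quasiMeasurePreserving_snd).enorm))
    have hgm : AEMeasurable g π := hWhalf.aemeasurable.mul
      (((hτm.comp_quasiMeasurePreserving Measure.quasiMeasurePreserving_fst).enorm).add
        ((hτm.comp_quasiMeasurePreserving Measure.quasiMeasurePreserving_snd).enorm))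
    -- pointwise bound
    have hpt : ∀ p : E × E,
        (‖(J (p.1 - p.2) * (ψ₁ p.1 - ψ₁ p.2) ^ 2) - (J (p.1 - p.2) * (ψ₂ p.1 - ψ₂ p.2) ^ 2)‖₊ : ℝ≥0∞)
          ≤ f p * g p := by
      intro p
      have hring : (J (p.1 - p.2) * (ψ₁ p.1 - ψ₁ p.2) ^ 2) - (J (p.1 - p.2) * (ψ₂ p.1 - ψ₂ p.2) ^ 2)
          = J (p.1 - p.2) * ((δ p.1 - δ p.2) * ((ψ₁ p.1 - ψ₁ p.2) + (ψ₂ p.1 - ψ₂ p.2))) := by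
        simp only [hδdef]
        ring
      rw [hring, nnnorm_mul, nnnorm_mul, ENNReal.coe_mul, ENNReal.coe_mul]
      have hfg : f p * g p = ((‖J (p.1 - p.2)‖₊ : ℝ≥0∞) ^ (1/2:ℝ) * (‖J (p.1 - p.2)‖₊ : ℝ≥0∞) ^ (1/2:ℝ))
          * (((‖δ p.1‖₊ : ℝ≥0∞) + (‖δ p.2‖₊ : ℝ≥0∞)) * ((‖τ p.1‖₊ : ℝ≥0∞) + (‖τ p.2‖₊ : ℝ≥0∞))) := by
        simp only [hfdef, hgdef]
        ring
      have hWW : (‖J (p.1 - p.2)‖₊ : ℝ≥0∞) ^ (1/2:ℝ) * (‖J (p.1 - p.2)‖₊ : ℝ≥0∞) ^ (1/2:ℝ)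
          = (‖J (p.1 - p.2)‖₊ : ℝ≥0∞) := by
        rw [← ENNReal.rpow_add_of_nonneg _ _ (by norm_num) (by norm_num)]
        norm_num
      rw [hfg, hWW]
      refine mul_le_mul_right (mul_le_mul' ?_ ?_) _
      · rw [← ENNReal.coe_add]
        exact ENNReal.coe_le_coe.mpr (nnnorm_sub_le _ _)
      · rw [← ENNReal.coe_add]
        refine ENNReal.coe_le_coe.mpr ?_
        rw [hτdef]
        simp only [nnnorm_norm_add_norm]
        have : ‖(ψ₁ p.1 - ψ₁ p.2) + (ψ₂ p.1 - ψ₂ p.2)‖₊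
            ≤ (‖ψ₁ p.1‖₊ + ‖ψ₁ p.2‖₊) + (‖ψ₂ p.1‖₊ + ‖ψ₂ p.2‖₊) :=
          le_trans (nnnorm_add_le _ _) (add_le_add (nnnorm_sub_le _ _) (nnnorm_sub_le _ _))
        refine le_trans this (le_of_eq ?_)
        ring
    -- Hölder factor bounds
    have hf2 : ∫⁻ p, f p ^ (2:ℝ) ∂π ≤ 4 * K * S δ := by
      refine le_trans (le_of_eq (lintegral_congr fun p => half_sq _ _)) (hWbound δ hδm)
    have hg2 : ∫⁻ p, g p ^ (2:ℝ) ∂π ≤ 4 * K * (2 * S ψ₁ + 2 * S ψ₂) := by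
      refine le_trans (le_of_eq (lintegral_congr fun p => half_sq _ _)) ?_
      refine le_trans (hWbound τ hτm) ?_
      refine mul_le_mul_right ?_ _
      refine le_trans (hS_tri _ _ h₁.1.norm.aemeasurable) (le_of_eq ?_)
      rw [hS_norm, hS_norm]
    -- assemble
    have hImain : ∫⁻ p : E × E,
        (‖(J (p.1 - p.2) * (ψ₁ p.1 - ψ₁ p.2) ^ 2) - (J (p.1 - p.2) * (ψ₂ p.1 - ψ₂ p.2) ^ 2)‖₊ : ℝ≥0∞) ∂π
          ≤ ((4 * K * S δ) ^ (1/2:ℝ)) * ((4 * K * (2 * S ψ₁ + 2 * S ψ₂)) ^ (1/2:ℝ)) := by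
      refine le_trans (lintegral_mono hpt) ?_
      refine le_trans (holder2 π hfm hgm) ?_
      exact mul_le_mul' (ENNReal.rpow_le_rpow hf2 (by norm_num))
        (ENNReal.rpow_le_rpow hg2 (by norm_num))
    have hRHSne : ((4 * K * S δ) ^ (1/2:ℝ)) * ((4 * K * (2 * S ψ₁ + 2 * S ψ₂)) ^ (1/2:ℝ)) ≠ ⊤ := by
      apply ENNReal.mul_ne_top
      · exact ENNReal.rpow_ne_top_of_nonneg (by norm_num)
          (ENNReal.mul_ne_top (ENNReal.mul_ne_top (by norm_num) hK) (hS_ne_top δ hδ2))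
      · exact ENNReal.rpow_ne_top_of_nonneg (by norm_num)
          (ENNReal.mul_ne_top (ENNReal.mul_ne_top (by norm_num) hK)
            (ENNReal.add_ne_top.mpr ⟨ENNReal.mul_ne_top (by norm_num) (hS_ne_top ψ₁ h₁),
              ENNReal.mul_ne_top (by norm_num) (hS_ne_top ψ₂ h₂)⟩))
    have hsub : A ψ₁ - A ψ₂ = ∫ p : E × E,
        ((J (p.1 - p.2) * (ψ₁ p.1 - ψ₁ p.2) ^ 2) - (J (p.1 - p.2) * (ψ₂ p.1 - ψ₂ p.2) ^ 2)) ∂π :=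
      (integral_sub (hFint ψ₁ h₁) (hFint ψ₂ h₂)).symm
    rw [← Real.norm_eq_abs, hsub]
    refine le_trans (norm_integral_le_lintegral_norm _) ?_
    rw [lintegral_congr fun p => ofReal_norm _]
    exact ENNReal.toReal_mono hRHSne hImain
  -- convergence of S of the differences
  have hδk2 : ∀ k, MemLp (fun x => φk k x - φ x) 2 μ := fun k => (hφk k).sub hφ
  have hptS : ∀ r : ℝ, (‖r‖₊ : ℝ≥0∞) ^ (2:ℕ) = ENNReal.ofReal (r ^ 2) := by
    intro r
    rw [← enorm_eq_nnnorm, ← ofReal_norm, ← ENNReal.ofReal_pow (norm_nonneg r), Real.norm_eq_abs,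
      sq_abs]
  have hSeq : ∀ k, S (fun x => φk k x - φ x) = ENNReal.ofReal (∫ x, (φk k x - φ x) ^ 2 ∂μ) := by
    intro k
    rw [hS_pow, ofReal_integral_eq_lintegral_ofReal (hδk2 k).integrable_sq
      (Eventually.of_forall fun x => sq_nonneg _)]
    exact lintegral_congr fun x => hptS _
  have hSconv : Tendsto (fun k => S (fun x => φk k x - φ x)) atTop (nhds 0) := by
    have h0 : Tendsto (fun k => ENNReal.ofReal (∫ x, (φk k x - φ x) ^ 2 ∂μ)) atTop
        (nhds (ENNReal.ofReal 0)) := (ENNReal.continuous_ofReal.tendsto 0).comp hconv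
    rw [ENNReal.ofReal_zero] at h0
    exact h0.congr fun k => (hSeq k).symm
  -- A convergence
  have hAconv : Tendsto (fun k => A (φk k)) atTop (nhds (A φ)) := by
    set C : ℝ := ((4 * K * (2 * (2 + 2 * S φ) + 2 * S φ)) ^ (1/2:ℝ)).toReal with hCdef
    have hMne : (4 * K * (2 * (2 + 2 * S φ) + 2 * S φ)) ≠ ⊤ := by
      refine ENNReal.mul_ne_top (ENNReal.mul_ne_top (by norm_num) hK) ?_
      refine ENNReal.add_ne_top.mpr ⟨?_, ENNReal.mul_ne_top (by norm_num) (hS_ne_top φ hφ)⟩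
      exact ENNReal.mul_ne_top (by norm_num) (ENNReal.add_ne_top.mpr
        ⟨by norm_num, ENNReal.mul_ne_top (by norm_num) (hS_ne_top φ hφ)⟩)
    have hev1 : ∀ᶠ k in atTop, S (fun x => φk k x - φ x) ≤ 1 :=
      (hSconv.eventually_lt_const zero_lt_one).mono fun k hk => hk.le
    have hevb : ∀ᶠ k in atTop, |A (φk k) - A φ|
        ≤ ((4 * K * S (fun x => φk k x - φ x)) ^ (1/2:ℝ)).toReal * C := by
      filter_upwards [hev1] with k hk
      refine le_trans (hEst (φk k) φ (hφk k) hφ) ?_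
      rw [hCdef, ← ENNReal.toReal_mul]
      refine ENNReal.toReal_mono ?_ ?_
      · exact ENNReal.mul_ne_top
          (ENNReal.rpow_ne_top_of_nonneg (by norm_num) (ENNReal.mul_ne_top
            (ENNReal.mul_ne_top (by norm_num) hK) (hS_ne_top _ (hδk2 k))))
          (ENNReal.rpow_ne_top_of_nonneg (by norm_num) hMne)
      · refine mul_le_mul_right (ENNReal.rpow_le_rpow ?_ (by norm_num)) _
        refine mul_le_mul_right ?_ _
        have hSk : S (φk k) ≤ 2 * S (fun x => φk k x - φ x) + 2 * S φ := by
          have heq : (fun x : E => (φk k x - φ x) + φ x) = φk k := by funext x; ring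
          have := hS_tri (fun x => φk k x - φ x) φ (hδk2 k).1.aemeasurable
          rwa [heq] at this
        refine add_le_add (mul_le_mul_right (le_trans hSk ?_) _) le_rfl
        exact add_le_add (le_trans (mul_le_mul_right hk _) (by norm_num)) le_rfl
    have hbconv : Tendsto
        (fun k => ((4 * K * S (fun x => φk k x - φ x)) ^ (1/2:ℝ)).toReal * C) atTop (nhds 0) := by
      have t1 : Tendsto (fun k => 4 * K * S (fun x => φk k x - φ x)) atTop (nhds 0) := by
        have := ENNReal.Tendsto.const_mul (a := 4 * K) hSconv
          (Or.inr (ENNReal.mul_ne_top (by norm_num) hK))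
        rwa [mul_zero] at this
      have t2 : Tendsto (fun k => (4 * K * S (fun x => φk k x - φ x)) ^ (1/2:ℝ)) atTop
          (nhds 0) := by
        have := ((ENNReal.continuous_rpow_const (y := (1/2:ℝ))).tendsto 0).comp t1
        rwa [ENNReal.zero_rpow_of_pos (by norm_num)] at this
      have t3 : Tendsto (fun k => ((4 * K * S (fun x => φk k x - φ x)) ^ (1/2:ℝ)).toReal) atTop
          (nhds 0) := by
        have := (ENNReal.tendsto_toReal (a := 0) (by simp)).comp t2
        simpa [Function.comp_def] using this
      simpa using t3.mul_const C
    have habs : Tendsto (fun k => |A (φk k) - A φ|) atTop (nhds 0) :=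
      squeeze_zero' (Eventually.of_forall fun k => abs_nonneg _) hevb hbconv
    rw [← tendsto_sub_nhds_zero_iff]
    exact (tendsto_zero_iff_abs_tendsto_zero _).mpr habs
  -- B part
  set B : (E → ℝ) → ℝ≥0∞ := fun ψ => ∫⁻ x, G (ψ x) ∂μ with hBdef
  have heLp : Tendsto (fun k => eLpNorm ((φk k) - φ) 2 μ) atTop (nhds 0) := by
    have heq : ∀ k, eLpNorm ((φk k) - φ) 2 μ = (S (fun x => φk k x - φ x)) ^ (1/2:ℝ) := by
      intro k
      rw [eLpNorm_eq_lintegral_rpow_enorm_toReal (by norm_num) (by norm_num)]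
      simp only [ENNReal.toReal_ofNat, hSdef]
      rfl
    have := ((ENNReal.continuous_rpow_const (y := (1/2:ℝ))).tendsto 0).comp hSconv
    rw [ENNReal.zero_rpow_of_pos (by norm_num)] at this
    exact this.congr fun k => (heq k).symm
  have hTIM : TendstoInMeasure μ (fun k => φk k) atTop φ :=
    tendstoInMeasure_of_tendsto_eLpNorm (by norm_num) (fun k => (hφk k).1) hφ.1 heLp
  have hB : B φ ≤ liminf (fun k => B (φk k)) atTop := by
    by_contra hcon
    push_neg at hcon
    obtain ⟨c, hc1, hc2⟩ := exists_between hcon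
    have hfreq : ∃ᶠ k in atTop, B (φk k) < c := frequently_lt_of_liminf_lt (by isBoundedDefault) hc1
    obtain ⟨ks, hks_mono, hks⟩ := Filter.extraction_of_frequently_atTop hfreq
    have hTIMs : TendstoInMeasure μ (fun j => φk (ks j)) atTop φ :=
      fun ε hε => (hTIM ε hε).comp hks_mono.tendsto_atTop
    obtain ⟨ls, hls_mono, hae⟩ := hTIMs.exists_seq_tendsto_ae
    have hmeasG : ∀ m, AEMeasurable (fun x => G (φk (ks (ls m)) x)) μ := fun m =>
      hG.measurable.comp_aemeasurable (hφk _).1.aemeasurable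
    have hfatou : B φ ≤ liminf (fun m => B (φk (ks (ls m)))) atTop := by
      refine le_trans (lintegral_mono_ae ?_) (lintegral_liminf_le' hmeasG)
      filter_upwards [hae] with x hx
      exact lsc_le_liminf hG hx
    have hle : liminf (fun m => B (φk (ks (ls m)))) atTop ≤ c := by
      refine le_trans (liminf_le_liminf (Eventually.of_forall fun m => (hks (ls m)).le)) ?_
      simp [Filter.liminf_const]
    exact absurd (le_trans hfatou hle) (not_le.mpr hc2)
  -- final assembly
  have hfe_eq : ∀ ψ : E → ℝ, MemLp ψ 2 μ → freeEnergy Ω J G ψ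
      = (((1/4 * A ψ : ℝ)) : EReal) + ((B ψ : ℝ≥0∞) : EReal) := by
    intro ψ hψ
    have hiter : (∫ x in Ω, ∫ y in Ω, J (x - y) * (ψ x - ψ y) ^ 2) = A ψ := by
      rw [hAdef]
      exact integral_integral (hFint ψ hψ)
    simp only [freeEnergy, ← hμdef, hBdef]
    exact congrArg (fun t : ℝ => ((1/4 * t : ℝ) : EReal) + ((∫⁻ x, G (ψ x) ∂μ : ℝ≥0∞) : EReal)) hiter
  have hAlim : liminf (fun k => ((1/4 * A (φk k) : ℝ) : EReal)) atTop
      = ((1/4 * A φ : ℝ) : EReal) := by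
    refine Tendsto.liminf_eq ?_
    exact EReal.tendsto_coe.mpr (hAconv.const_mul (1/4))
  have hBlim : ((B φ : ℝ≥0∞) : EReal) ≤ liminf (fun k => ((B (φk k) : ℝ≥0∞) : EReal)) atTop :=
    coe_ennreal_le_liminf hB
  rw [hfe_eq φ hφ]
  have hgoal : liminf (fun k => freeEnergy Ω J G (φk k)) atTop
      = liminf (fun k => ((1/4 * A (φk k) : ℝ) : EReal) + ((B (φk k) : ℝ≥0∞) : EReal)) atTop := by
    congr 1
    funext k
    exact hfe_eq (φk k) (hφk k)
  rw [hgoal]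
  calc ((1/4 * A φ : ℝ) : EReal) + ((B φ : ℝ≥0∞) : EReal)
      ≤ liminf (fun k => ((1/4 * A (φk k) : ℝ) : EReal)) atTop
        + liminf (fun k => ((B (φk k) : ℝ≥0∞) : EReal)) atTop := by
        rw [hAlim]
        exact add_le_add le_rfl hBlim
    _ ≤ liminf ((fun k => ((1/4 * A (φk k) : ℝ) : EReal))
          + (fun k => ((B (φk k) : ℝ≥0∞) : EReal))) atTop := EReal.le_liminf_add
    _ = liminf (fun k => ((1/4 * A (φk k) : ℝ) : EReal) + ((B (φk k) : ℝ≥0∞) : EReal)) atTop := rfl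

end test

/-- **Lower semicontinuity of the free energy functional (Claim (2) of
Lemma 3.10).**  Let `G : ℝ → [0,∞]` be lower semicontinuous.  Then the
functional `f` is sequentially lower semicontinuous with respect to the
`L²(Ω)` norm: whenever `φ_k → φ` in `L²(Ω)`, one has
`f(φ) ≤ liminf_{k→∞} f(φ_k)`. -/
theorem freeEnergy_lowerSemicontinuous
    {n : ℕ} (Ω : Set (EuclideanSpace ℝ (Fin n)))
    (hΩmeas : MeasurableSet Ω) (hΩbdd : Bornology.IsBounded Ω)
    (hΩpos : 0 < volume Ω)
    (J : EuclideanSpace ℝ (Fin n) → ℝ)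
    (hJint : Integrable J)
    (hJsymm : ∀ᵐ x ∂(volume : Measure (EuclideanSpace ℝ (Fin n))), J x = J (-x))
    (G : ℝ → ENNReal) (hG : LowerSemicontinuous G) :
    ∀ (φ : EuclideanSpace ℝ (Fin n) → ℝ)
      (φk : ℕ → EuclideanSpace ℝ (Fin n) → ℝ),
      MemLp φ 2 (volume.restrict Ω) →
      (∀ k, MemLp (φk k) 2 (volume.restrict Ω)) →
      Filter.Tendsto (fun k => ∫ x in Ω, (φk k x - φ x) ^ 2)
        Filter.atTop (nhds 0) →
      freeEnergy Ω J G φ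
        ≤ Filter.liminf (fun k => freeEnergy Ω J G (φk k)) Filter.atTop := by
  intro φ φk hφ hφk hconv
  set J' : EuclideanSpace ℝ (Fin n) → ℝ := hJint.1.mk J with hJ'def
  have hJ'sm : StronglyMeasurable J' := hJint.1.stronglyMeasurable_mk
  have hJae : J =ᵐ[volume] J' := hJint.1.ae_eq_mk
  have hJ'int : Integrable J' := hJint.congr hJae
  have hfe : ∀ ψ : EuclideanSpace ℝ (Fin n) → ℝ,
      freeEnergy Ω J G ψ = freeEnergy Ω J' G ψ := by
    intro ψ
    have hinner : ∀ x : EuclideanSpace ℝ (Fin n),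
        (∫ y in Ω, J (x - y) * (ψ x - ψ y) ^ 2) = ∫ y in Ω, J' (x - y) * (ψ x - ψ y) ^ 2 := by
      intro x
      refine integral_congr_ae ?_
      have h1 : (fun y => J (x - y)) =ᵐ[(volume : Measure (EuclideanSpace ℝ (Fin n)))]
          fun y => J' (x - y) :=
        (mp_sub_left (n := n) x).quasiMeasurePreserving.ae_eq_comp hJae
      filter_upwards [ae_restrict_of_ae h1] with y hy
      rw [hy]
    have houter : (∫ x in Ω, ∫ y in Ω, J (x - y) * (ψ x - ψ y) ^ 2)
        = ∫ x in Ω, ∫ y in Ω, J' (x - y) * (ψ x - ψ y) ^ 2 :=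
      integral_congr_ae (Filter.Eventually.of_forall fun x => hinner x)
    simp only [freeEnergy, houter]
  rw [hfe φ, show (fun k => freeEnergy Ω J G (φk k)) = fun k => freeEnergy Ω J' G (φk k)
    from funext fun k => hfe _]
  exact freeEnergy_key Ω J' hJ'sm hJ'int G hG φ φk hφ hφk hconv
end

section
/- Let Ω ⊂ ℝⁿ be bounded and open, p ≥ 2, C₀ > 0, J ∈ W^{1,1}(ℝⁿ), and F twice continuously differentiable on (−1,1) with a(x) + F″(s) ≥ C₀ for all s ∈ (−1,1) and a.e. x ∈ Ω. Let φ ∈ Lᵖ(Ω) with φ(x) ∈ (−1,1) a.e., and suppose measurable vector fields dφ, dμ : Ω → ℝⁿ belong to Lᵖ(Ω;ℝⁿ) and satisfy the pointwise identity dμ(x) = (a(x) + F″(φ(x)))·dφ(x) + φ(x)·∇a(x) − (∇J∗φ)(x) for a.e. x ∈ Ω, where ∇a(x) := ∫_Ω ∇J(x−y) dy and (∇J∗φ)(x) := ∫_Ω ∇J(x−y)φ(y) dy. Then (C₀/4)·‖dφ‖_{Lᵖ(Ω)}ᵖ ≤ (1/p)·(2(p−1)/(C₀p))^{p−1}·[2^{p−1}·‖dμ‖_{Lᵖ(Ω)}ᵖ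 + (‖∇a‖_{L∞(Ω)} + ‖∇J‖_{L¹(ℝⁿ)})ᵖ·‖φ‖_{Lᵖ(Ω)}ᵖ]. -/
open MeasureTheory Measure
open scoped ENNReal NNReal

private lemma young_param {p : ℝ} (hp : 1 < p) {ε : ℝ} (hε : 0 < ε) {a b : ℝ}
    (ha : 0 ≤ a) (hb : 0 ≤ b) :
    a * b ^ (p - 1) ≤ (1 / p) * ((p - 1) / (p * ε)) ^ (p - 1) * a ^ p + ε * b ^ p := by
  set q := p / (p - 1) with hq
  have hpq : p.HolderConjugate q := Real.HolderConjugate.conjExponent hp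
  have hppos : 0 < p := by linarith
  have hp1 : 0 < p - 1 := by linarith
  have hqpos : 0 < q := hpq.symm.pos
  have hqε : 0 < q * ε := mul_pos hqpos hε
  set t : ℝ := (q * ε) ^ (1 / q) with ht
  have htpos : 0 < t := Real.rpow_pos_of_pos hqε _
  have htq : t ^ q = q * ε := by
    rw [ht, ← Real.rpow_mul hqε.le, one_div_mul_cancel hqpos.ne', Real.rpow_one]
  have htp : t ^ p = (q * ε) ^ (p - 1) := by
    rw [ht, ← Real.rpow_mul hqε.le]
    congr 1
    rw [one_div, inv_mul_eq_div, hq]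
    field_simp
  have key := Real.young_inequality_of_nonneg (a := a / t) (b := t * b ^ (p - 1))
    (div_nonneg ha htpos.le) (mul_nonneg htpos.le (Real.rpow_nonneg hb _)) hpq
  have h1 : a / t * (t * b ^ (p - 1)) = a * b ^ (p - 1) := by
    field_simp
  have h2 : (a / t) ^ p = a ^ p / (q * ε) ^ (p - 1) := by
    rw [Real.div_rpow ha htpos.le, htp]
  have h3 : (t * b ^ (p - 1)) ^ q = q * ε * b ^ p := by
    rw [Real.mul_rpow htpos.le (Real.rpow_nonneg hb _), htq, ← Real.rpow_mul hb]
    congr 2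
    rw [hq]; field_simp
  rw [h1, h2, h3] at key
  have h4 : q * ε * b ^ p / q = ε * b ^ p := by
    field_simp
  have h5 : a ^ p / (q * ε) ^ (p - 1) / p = 1 / p * ((p - 1) / (p * ε)) ^ (p - 1) * a ^ p := by
    have hinv : (p - 1) / (p * ε) = (q * ε)⁻¹ := by
      rw [hq]; field_simp
    rw [hinv, Real.inv_rpow hqε.le]
    have hne : (q * ε) ^ (p - 1) ≠ 0 := (Real.rpow_pos_of_pos hqε _).ne'
    field_simp
  rw [h4, h5] at key
  linarith

private lemma ofReal_norm_eq_coe_nnnorm {E : Type*} [NormedAddCommGroup E] (a : E) :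
    ENNReal.ofReal ‖a‖ = (‖a‖₊ : ℝ≥0∞) :=
  ofReal_norm a

private lemma self_mul_rpow_sub_one {p b : ℝ} (hp : 1 < p) (hb : 0 ≤ b) :
    b * b ^ (p - 1) = b ^ p := by
  rcases eq_or_lt_of_le hb with h | h
  · rw [← h, Real.zero_rpow (by linarith : p - 1 ≠ 0),
      Real.zero_rpow (by linarith : p ≠ 0), mul_zero]
  · nth_rewrite 1 [← Real.rpow_one b]
    rw [← Real.rpow_add h]
    ring_nf

private lemma integral_norm_rpow_eq {α E : Type*} [MeasurableSpace α] [NormedAddCommGroup E]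
    (μ : Measure α) {f : α → E} (hf : AEStronglyMeasurable f μ) {p : ℝ} (hp : 0 < p) :
    ∫ x, ‖f x‖ ^ p ∂μ = (∫⁻ x, (‖f x‖₊ : ℝ≥0∞) ^ p ∂μ).toReal := by
  rw [integral_eq_lintegral_of_nonneg_ae
      (Filter.Eventually.of_forall fun x => Real.rpow_nonneg (norm_nonneg _) _)
      ((hf.norm.aemeasurable.pow aemeasurable_const).aestronglyMeasurable)]
  congr 1
  refine lintegral_congr fun x => ?_
  rw [← ofReal_norm_eq_coe_nnnorm, ← ENNReal.ofReal_rpow_of_nonneg (norm_nonneg _) hp.le]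

variable {n : ℕ} {E : Type*} [NormedAddCommGroup E]

private lemma aesm_sub_prod (Ω Ω' : Set (EuclideanSpace ℝ (Fin n)))
    {g : EuclideanSpace ℝ (Fin n) → E} (hg : AEStronglyMeasurable g volume) :
    AEStronglyMeasurable (fun z : EuclideanSpace ℝ (Fin n) × EuclideanSpace ℝ (Fin n) =>
      g (z.1 - z.2)) ((volume.restrict Ω).prod (volume.restrict Ω')) := by
  have hmeas : Measurable (fun z : EuclideanSpace ℝ (Fin n) × EuclideanSpace ℝ (Fin n) =>
      z.1 - z.2) := measurable_fst.sub measurable_snd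
  have hqmp : Measure.QuasiMeasurePreserving
      (fun z : EuclideanSpace ℝ (Fin n) × EuclideanSpace ℝ (Fin n) => z.1 - z.2)
      ((volume.restrict Ω).prod (volume.restrict Ω')) volume := by
    refine ⟨hmeas, ?_⟩
    have h1 : Measure.map (fun z : EuclideanSpace ℝ (Fin n) × EuclideanSpace ℝ (Fin n) =>
          z.1 - z.2) ((volume.restrict Ω).prod (volume.restrict Ω'))
        ≤ Measure.map (fun z : EuclideanSpace ℝ (Fin n) × EuclideanSpace ℝ (Fin n) =>
          z.1 - z.2) ((volume : Measure (EuclideanSpace ℝ (Fin n))).prod volume) := by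
      refine Measure.map_mono ?_ hmeas
      rw [Measure.prod_restrict]
      exact Measure.restrict_le_self
    have h2 : Measure.map (fun z : EuclideanSpace ℝ (Fin n) × EuclideanSpace ℝ (Fin n) =>
          z.1 - z.2) ((volume : Measure (EuclideanSpace ℝ (Fin n))).prod volume)
        = ((volume : Measure (EuclideanSpace ℝ (Fin n))) Set.univ) • (volume : Measure (EuclideanSpace ℝ (Fin n))) := by
      have hcomp : (fun z : EuclideanSpace ℝ (Fin n) × EuclideanSpace ℝ (Fin n) => z.1 - z.2)
          = Prod.fst ∘ (fun z : EuclideanSpace ℝ (Fin n) × EuclideanSpace ℝ (Fin n) =>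
            (z.1 - z.2, z.2)) := rfl
      rw [hcomp, ← Measure.map_map measurable_fst (hmeas.prodMk measurable_snd),
        (measurePreserving_sub_prod _ _).map_eq, Measure.map_fst_prod]
    exact (Measure.absolutelyContinuous_of_le h1).trans
      (h2 ▸ Measure.smul_absolutelyContinuous)
  exact hg.comp_quasiMeasurePreserving hqmp

private lemma lintegral_sub_left {g : EuclideanSpace ℝ (Fin n) → E}
    (hg : AEStronglyMeasurable g volume) (x : EuclideanSpace ℝ (Fin n)) :
    ∫⁻ y, (‖g (x - y)‖₊ : ℝ≥0∞) ∂volume = ∫⁻ z, (‖g z‖₊ : ℝ≥0∞) ∂volume := by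
  have hmp := measurePreserving_sub_left (volume : Measure (EuclideanSpace ℝ (Fin n))) x
  have h1 : AEMeasurable (fun z => (‖g z‖₊ : ℝ≥0∞))
      (Measure.map (fun t => x - t) (volume : Measure (EuclideanSpace ℝ (Fin n)))) := by
    rw [hmp.map_eq]; exact hg.enorm
  calc ∫⁻ y, (‖g (x - y)‖₊ : ℝ≥0∞) ∂volume
      = ∫⁻ z, (‖g z‖₊ : ℝ≥0∞) ∂(Measure.map (fun t => x - t) volume) :=
        (lintegral_map' h1 hmp.measurable.aemeasurable).symm
    _ = ∫⁻ z, (‖g z‖₊ : ℝ≥0∞) ∂volume := by rw [hmp.map_eq]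

private lemma lintegral_sub_right {g : EuclideanSpace ℝ (Fin n) → E}
    (hg : AEStronglyMeasurable g volume) (y : EuclideanSpace ℝ (Fin n)) :
    ∫⁻ x, (‖g (x - y)‖₊ : ℝ≥0∞) ∂volume = ∫⁻ z, (‖g z‖₊ : ℝ≥0∞) ∂volume := by
  have hmp := measurePreserving_sub_right (volume : Measure (EuclideanSpace ℝ (Fin n))) y
  have h1 : AEMeasurable (fun z => (‖g z‖₊ : ℝ≥0∞))
      (Measure.map (fun t => t - y) (volume : Measure (EuclideanSpace ℝ (Fin n)))) := by
    rw [hmp.map_eq]; exact hg.enorm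
  calc ∫⁻ x, (‖g (x - y)‖₊ : ℝ≥0∞) ∂volume
      = ∫⁻ z, (‖g z‖₊ : ℝ≥0∞) ∂(Measure.map (fun t => t - y) volume) :=
        (lintegral_map' h1 hmp.measurable.aemeasurable).symm
    _ = ∫⁻ z, (‖g z‖₊ : ℝ≥0∞) ∂volume := by rw [hmp.map_eq]

private lemma aesm_translate {g : EuclideanSpace ℝ (Fin n) → E}
    (hg : AEStronglyMeasurable g volume) (Ω : Set (EuclideanSpace ℝ (Fin n)))
    (x : EuclideanSpace ℝ (Fin n)) :
    AEStronglyMeasurable (fun y => g (x - y)) (volume.restrict Ω) := by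
  have hmp := measurePreserving_sub_left (volume : Measure (EuclideanSpace ℝ (Fin n))) x
  exact (hg.comp_quasiMeasurePreserving hmp.quasiMeasurePreserving).restrict

private lemma conv_lintegral_le [NormedSpace ℝ E] [CompleteSpace E]
    (Ω : Set (EuclideanSpace ℝ (Fin n)))
    {p q : ℝ} (hpq : p.HolderConjugate q)
    {φ : EuclideanSpace ℝ (Fin n) → ℝ}
    {K : EuclideanSpace ℝ (Fin n) → E}
    (hφm : AEStronglyMeasurable φ (volume.restrict Ω))
    (hK : Integrable K) :
    ∫⁻ x, (‖∫ y in Ω, φ y • K (x - y)‖₊ : ℝ≥0∞) ^ p ∂(volume.restrict Ω)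
      ≤ (∫⁻ z, (‖K z‖₊ : ℝ≥0∞) ∂volume) ^ p
        * ∫⁻ y, (‖φ y‖₊ : ℝ≥0∞) ^ p ∂(volume.restrict Ω) := by
  set Ωm := volume.restrict Ω with hΩm
  set N := ∫⁻ z, (‖K z‖₊ : ℝ≥0∞) ∂volume with hNdef
  have hp0 : 0 < p := hpq.pos
  have hq0 : 0 < q := hpq.symm.pos
  have hNfin : N ≠ ∞ := hK.2.ne
  set A : EuclideanSpace ℝ (Fin n) → ℝ≥0∞ :=
    fun x => ∫⁻ y, (‖φ y‖₊ : ℝ≥0∞) ^ p * (‖K (x - y)‖₊ : ℝ≥0∞) ∂Ωm with hAdef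
  have step12 : ∀ x, (‖∫ y in Ω, φ y • K (x - y)‖₊ : ℝ≥0∞) ≤ (A x) ^ (1/p) * N ^ (1/q) := by
    intro x
    have hKx : AEMeasurable (fun y => (‖K (x - y)‖₊ : ℝ≥0∞)) Ωm :=
      (aesm_translate hK.1 Ω x).enorm
    have h1 : (‖∫ y in Ω, φ y • K (x - y)‖₊ : ℝ≥0∞)
        ≤ ∫⁻ y, (‖φ y‖₊ : ℝ≥0∞) * (‖K (x - y)‖₊ : ℝ≥0∞) ∂Ωm := by
      refine (enorm_integral_le_lintegral_enorm _).trans_eq ?_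
      refine lintegral_congr fun y => ?_
      change ((‖φ y • K (x - y)‖₊ : ℝ≥0) : ℝ≥0∞) = _
      rw [nnnorm_smul, ENNReal.coe_mul]
    refine h1.trans ?_
    have hf : AEMeasurable
        (fun y => (‖φ y‖₊ : ℝ≥0∞) * (‖K (x - y)‖₊ : ℝ≥0∞) ^ (1/p)) Ωm :=
      hφm.enorm.mul (hKx.pow aemeasurable_const)
    have hg : AEMeasurable (fun y => (‖K (x - y)‖₊ : ℝ≥0∞) ^ (1/q)) Ωm :=
      hKx.pow aemeasurable_const
    have holder := ENNReal.lintegral_mul_le_Lp_mul_Lq Ωm hpq hf hg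
    have e1 : ∫⁻ y, ((fun y => (‖φ y‖₊ : ℝ≥0∞) * (‖K (x - y)‖₊ : ℝ≥0∞) ^ (1/p)) *
        (fun y => (‖K (x - y)‖₊ : ℝ≥0∞) ^ (1/q))) y ∂Ωm
        = ∫⁻ y, (‖φ y‖₊ : ℝ≥0∞) * (‖K (x - y)‖₊ : ℝ≥0∞) ∂Ωm := by
      refine lintegral_congr fun y => ?_
      simp only [Pi.mul_apply]
      rw [mul_assoc, ← ENNReal.rpow_add_of_nonneg _ _ (by positivity) (by positivity)]
      rw [one_div, one_div, hpq.inv_add_inv_eq_one, ENNReal.rpow_one]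
    have e2 : ∫⁻ y, ((‖φ y‖₊ : ℝ≥0∞) * (‖K (x - y)‖₊ : ℝ≥0∞) ^ (1/p)) ^ p ∂Ωm = A x := by
      refine lintegral_congr fun y => ?_
      rw [ENNReal.mul_rpow_of_nonneg _ _ hp0.le, ← ENNReal.rpow_mul,
        one_div_mul_cancel hp0.ne', ENNReal.rpow_one]
    have e3 : ∫⁻ y, ((‖K (x - y)‖₊ : ℝ≥0∞) ^ (1/q)) ^ q ∂Ωm ≤ N := by
      have : ∫⁻ y, ((‖K (x - y)‖₊ : ℝ≥0∞) ^ (1/q)) ^ q ∂Ωm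
          = ∫⁻ y, (‖K (x - y)‖₊ : ℝ≥0∞) ∂Ωm := by
        refine lintegral_congr fun y => ?_
        rw [← ENNReal.rpow_mul, one_div_mul_cancel hq0.ne', ENNReal.rpow_one]
      rw [this, hΩm]
      exact (setLIntegral_le_lintegral _ _).trans (lintegral_sub_left hK.1 x).le
    rw [e1, e2] at holder
    exact holder.trans (mul_le_mul_right (ENNReal.rpow_le_rpow e3 (by positivity)) _)
  have step4 : ∀ x, (‖∫ y in Ω, φ y • K (x - y)‖₊ : ℝ≥0∞) ^ p
      ≤ A x * N ^ ((1/q) * p) := by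
    intro x
    refine (ENNReal.rpow_le_rpow (step12 x) hp0.le).trans_eq ?_
    rw [ENNReal.mul_rpow_of_nonneg _ _ hp0.le, ← ENNReal.rpow_mul,
      one_div_mul_cancel hp0.ne', ENNReal.rpow_one, ← ENNReal.rpow_mul]
  have hNq : N ^ ((1/q) * p) ≠ ∞ := ENNReal.rpow_ne_top_of_nonneg (by positivity) hNfin
  have step5 : ∫⁻ x, (‖∫ y in Ω, φ y • K (x - y)‖₊ : ℝ≥0∞) ^ p ∂Ωm
      ≤ (∫⁻ x, A x ∂Ωm) * N ^ ((1/q) * p) := by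
    refine (lintegral_mono step4).trans_eq ?_
    exact lintegral_mul_const' _ _ hNq
  have hswap : ∫⁻ x, A x ∂Ωm
      = ∫⁻ y, ∫⁻ x, (‖φ y‖₊ : ℝ≥0∞) ^ p * (‖K (x - y)‖₊ : ℝ≥0∞) ∂Ωm ∂Ωm := by
    refine lintegral_lintegral_swap ?_
    exact ((hφm.comp_snd.enorm.pow aemeasurable_const).mul (aesm_sub_prod Ω Ω hK.1).enorm)
  have hinner : ∀ y, ∫⁻ x, (‖φ y‖₊ : ℝ≥0∞) ^ p * (‖K (x - y)‖₊ : ℝ≥0∞) ∂Ωm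
      ≤ (‖φ y‖₊ : ℝ≥0∞) ^ p * N := by
    intro y
    rw [lintegral_const_mul' _ _ (ENNReal.rpow_ne_top_of_nonneg hp0.le ENNReal.coe_ne_top)]
    refine mul_le_mul_right ?_ _
    rw [hΩm]
    exact (setLIntegral_le_lintegral _ _).trans (lintegral_sub_right hK.1 y).le
  have hA : ∫⁻ x, A x ∂Ωm ≤ (∫⁻ y, (‖φ y‖₊ : ℝ≥0∞) ^ p ∂Ωm) * N := by
    rw [hswap]
    refine (lintegral_mono hinner).trans_eq ?_
    exact lintegral_mul_const' _ _ hNfin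
  have hNN : N * N ^ ((1/q) * p) = N ^ p := by
    have h2 : p / q = p - 1 := hpq.div_conj_eq_sub_one
    have h1 : (1:ℝ) + (1/q) * p = p := by
      have h3 : (1/q) * p = p / q := by ring
      rw [h3, h2]; ring
    calc N * N ^ ((1/q) * p) = N ^ (1:ℝ) * N ^ ((1/q) * p) := by rw [ENNReal.rpow_one]
      _ = N ^ ((1:ℝ) + (1/q) * p) :=
          (ENNReal.rpow_add_of_nonneg _ _ zero_le_one (by positivity)).symm
      _ = N ^ p := by rw [h1]
  refine step5.trans ?_
  calc (∫⁻ x, A x ∂Ωm) * N ^ ((1/q) * p)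
      ≤ ((∫⁻ y, (‖φ y‖₊ : ℝ≥0∞) ^ p ∂Ωm) * N) * N ^ ((1/q) * p) :=
        mul_le_mul_left hA _
    _ = N ^ p * ∫⁻ y, (‖φ y‖₊ : ℝ≥0∞) ^ p ∂Ωm := by
        rw [mul_assoc, hNN, mul_comm]

/-- **Lᵖ gradient estimate (Step 3 of the regularity Theorem 4.2,
inequalities (s5)–(s7)).**  Let `Ω ⊂ ℝⁿ` be bounded and open, `p ≥ 2`,
`C₀ > 0`, `J ∈ W^{1,1}(ℝⁿ)` (with gradient `∇J ∈ L¹(ℝⁿ;ℝⁿ)`), and `F` twice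
continuously differentiable on `(-1,1)` with `a(x) + F''(s) ≥ C₀` for all
`s ∈ (-1,1)` and a.e. `x ∈ Ω`, where `a(x) = ∫_Ω J(x-y) dy`.  Let
`φ ∈ Lᵖ(Ω)` with `φ(x) ∈ (-1,1)` a.e., and let `dφ, dμ ∈ Lᵖ(Ω;ℝⁿ)` satisfy
`dμ(x) = (a(x) + F''(φ(x))) dφ(x) + φ(x) ∇a(x) - (∇J∗φ)(x)` a.e. in `Ω`,
where `∇a(x) = ∫_Ω ∇J(x-y) dy` and `(∇J∗φ)(x) = ∫_Ω φ(y) ∇J(x-y) dy`.  Then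
`(C₀/4)‖dφ‖_{Lᵖ}ᵖ ≤ (1/p)(2(p-1)/(C₀p))^{p-1} [2^{p-1}‖dμ‖_{Lᵖ}ᵖ
  + (‖∇a‖_{L∞} + ‖∇J‖_{L¹})ᵖ ‖φ‖_{Lᵖ}ᵖ]`. -/
theorem Lp_gradient_estimate
    {n : ℕ} (Ω : Set (EuclideanSpace ℝ (Fin n)))
    (hΩopen : IsOpen Ω) (hΩbdd : Bornology.IsBounded Ω)
    (p : ℝ) (hp : 2 ≤ p) (C₀ : ℝ) (hC₀ : 0 < C₀)
    (J : EuclideanSpace ℝ (Fin n) → ℝ)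
    (Jgrad : EuclideanSpace ℝ (Fin n) → EuclideanSpace ℝ (Fin n))
    (hJint : Integrable J) (hJgradInt : Integrable Jgrad)
    (hJsymm : ∀ᵐ x ∂(volume : Measure (EuclideanSpace ℝ (Fin n))), J x = J (-x))
    (F F' F'' : ℝ → ℝ)
    (hF' : ∀ s ∈ Set.Ioo (-1 : ℝ) 1, HasDerivAt F (F' s) s)
    (hF'' : ∀ s ∈ Set.Ioo (-1 : ℝ) 1, HasDerivAt F' (F'' s) s)
    (hF''cont : ContinuousOn F'' (Set.Ioo (-1 : ℝ) 1))
    (hcoer : ∀ᵐ x ∂(volume.restrict Ω),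
      ∀ s ∈ Set.Ioo (-1 : ℝ) 1, C₀ ≤ (∫ y in Ω, J (x - y)) + F'' s)
    (φ : EuclideanSpace ℝ (Fin n) → ℝ)
    (dφ dμ : EuclideanSpace ℝ (Fin n) → EuclideanSpace ℝ (Fin n))
    (hφ : MemLp φ (ENNReal.ofReal p) (volume.restrict Ω))
    (hφran : ∀ᵐ x ∂(volume.restrict Ω), φ x ∈ Set.Ioo (-1 : ℝ) 1)
    (hdφ : MemLp dφ (ENNReal.ofReal p) (volume.restrict Ω))
    (hdμ : MemLp dμ (ENNReal.ofReal p) (volume.restrict Ω))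
    (hident : ∀ᵐ x ∂(volume.restrict Ω),
      dμ x = ((∫ y in Ω, J (x - y)) + F'' (φ x)) • dφ x
        + φ x • (∫ y in Ω, Jgrad (x - y))
        - (∫ y in Ω, φ y • Jgrad (x - y))) :
    (C₀ / 4) * (∫ x in Ω, ‖dφ x‖ ^ p)
      ≤ (1 / p) * (2 * (p - 1) / (C₀ * p)) ^ (p - 1) *
          (2 ^ (p - 1) * (∫ x in Ω, ‖dμ x‖ ^ p)
            + ((eLpNormEssSup (fun x => ∫ y in Ω, Jgrad (x - y))
                  (volume.restrict Ω)).toReal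
                + ∫ x, ‖Jgrad x‖) ^ p * (∫ x in Ω, |φ x| ^ p)) := by
  have hp1 : (1 : ℝ) < p := by linarith
  have hp0 : (0 : ℝ) < p := by linarith
  have hpm1 : (0 : ℝ) < p - 1 := by linarith
  have hpq : p.HolderConjugate (p / (p - 1)) := Real.HolderConjugate.conjExponent hp1
  set Ωm := volume.restrict Ω with hΩm_def
  set P := ENNReal.ofReal p with hP_def
  have hP0 : P ≠ 0 := by
    simp [hP_def, ENNReal.ofReal_eq_zero, not_le, hp0]
  have hPtop : P ≠ ∞ := ENNReal.ofReal_ne_top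
  have hP1 : 1 ≤ P := by
    rw [hP_def, ← ENNReal.ofReal_one]
    exact ENNReal.ofReal_le_ofReal (by linarith)
  have hPtoReal : P.toReal = p := ENNReal.toReal_ofReal hp0.le
  set K : ℝ := 1 / p * (2 * (p - 1) / (C₀ * p)) ^ (p - 1) with hK_def
  have hKnonneg : 0 ≤ K := by
    rw [hK_def]
    exact mul_nonneg (by positivity) (Real.rpow_nonneg (by positivity) _)
  have h2p1 : (0 : ℝ) ≤ 2 ^ (p - 1) := Real.rpow_nonneg (by norm_num) _
  set da : EuclideanSpace ℝ (Fin n) → EuclideanSpace ℝ (Fin n) :=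
    fun x => ∫ y in Ω, Jgrad (x - y) with hda_def
  set cv : EuclideanSpace ℝ (Fin n) → EuclideanSpace ℝ (Fin n) :=
    fun x => ∫ y in Ω, φ y • Jgrad (x - y) with hcv_def
  set w : EuclideanSpace ℝ (Fin n) → EuclideanSpace ℝ (Fin n) :=
    fun x => φ x • da x - cv x with hw_def
  have hφm : AEStronglyMeasurable φ Ωm := hφ.1
  have hdφm : AEStronglyMeasurable dφ Ωm := hdφ.1
  have hdμm : AEStronglyMeasurable dμ Ωm := hdμ.1
  have hKprod : AEStronglyMeasurable
      (fun z : EuclideanSpace ℝ (Fin n) × EuclideanSpace ℝ (Fin n) => Jgrad (z.1 - z.2))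
      (Ωm.prod Ωm) := aesm_sub_prod Ω Ω hJgradInt.1
  have hdam : AEStronglyMeasurable da Ωm := hKprod.integral_prod_right'
  have hcvm : AEStronglyMeasurable cv Ωm := (hφm.comp_snd.smul hKprod).integral_prod_right'
  have hwm : AEStronglyMeasurable w Ωm := (hφm.smul hdam).sub hcvm
  -- the L¹ mass of the kernel
  set N : ℝ≥0∞ := ∫⁻ z, (‖Jgrad z‖₊ : ℝ≥0∞) ∂volume with hN_def
  have hNeq : N = ENNReal.ofReal (∫ x, ‖Jgrad x‖) :=
    (ofReal_integral_norm_eq_lintegral_enorm hJgradInt).symm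
  have hNfin : N ≠ ∞ := hJgradInt.2.ne
  have hM2nonneg : 0 ≤ ∫ x, ‖Jgrad x‖ := integral_nonneg fun x => norm_nonneg _
  -- the essential bound for da
  set M1 : ℝ≥0∞ := eLpNormEssSup da Ωm with hM1_def
  have hdabd : ∀ x, (‖da x‖₊ : ℝ≥0∞) ≤ N := by
    intro x
    refine (enorm_integral_le_lintegral_enorm _).trans ?_
    exact (setLIntegral_le_lintegral _ _).trans (lintegral_sub_left hJgradInt.1 x).le
  have hM1le : M1 ≤ N :=
    essSup_le_of_ae_le N (Filter.Eventually.of_forall hdabd)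
  have hM1fin : M1 ≠ ∞ := (lt_of_le_of_lt hM1le hNfin.lt_top).ne
  have hdaae : ∀ᵐ x ∂Ωm, ‖da x‖ ≤ M1.toReal := by
    filter_upwards [ae_le_eLpNormEssSup (f := da) (μ := Ωm)] with x hx
    have : ((‖da x‖₊ : ℝ≥0∞)).toReal ≤ M1.toReal := ENNReal.toReal_mono hM1fin hx
    simpa using this
  -- Lᵖ bound for φ • da
  have hsmul_le : eLpNorm (fun x => φ x • da x) P Ωm ≤ M1 * eLpNorm φ P Ωm := by
    have hbd : ∀ᵐ x ∂Ωm, ‖φ x • da x‖ ≤ ‖M1.toReal * φ x‖ := by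
      filter_upwards [hdaae] with x hx
      rw [norm_smul, Real.norm_eq_abs (M1.toReal * φ x), abs_mul,
        abs_of_nonneg ENNReal.toReal_nonneg, Real.norm_eq_abs]
      calc |φ x| * ‖da x‖ ≤ |φ x| * M1.toReal :=
            mul_le_mul_of_nonneg_left hx (abs_nonneg _)
        _ = M1.toReal * |φ x| := mul_comm _ _
    have heq : (fun x => M1.toReal * φ x) = M1.toReal • φ := by
      funext x; simp [smul_eq_mul]
    calc eLpNorm (fun x => φ x • da x) P Ωm
        ≤ eLpNorm (fun x => M1.toReal * φ x) P Ωm := eLpNorm_mono_ae hbd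
      _ = (‖M1.toReal‖₊ : ℝ≥0∞) * eLpNorm φ P Ωm := by
          rw [heq, eLpNorm_const_smul]
          rfl
      _ = M1 * eLpNorm φ P Ωm := by
          congr 1
          rw [← ofReal_norm_eq_coe_nnnorm, Real.norm_eq_abs,
            abs_of_nonneg ENNReal.toReal_nonneg, ENNReal.ofReal_toReal hM1fin]
  -- Lᵖ bound for the convolution (Young)
  have hcv_le : eLpNorm cv P Ωm ≤ N * eLpNorm φ P Ωm := by
    rw [eLpNorm_eq_lintegral_rpow_enorm_toReal hP0 hPtop, eLpNorm_eq_lintegral_rpow_enorm_toReal hP0 hPtop,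
      hPtoReal]
    have hyoung := conv_lintegral_le Ω hpq hφm hJgradInt
    calc (∫⁻ x, (‖cv x‖₊ : ℝ≥0∞) ^ p ∂Ωm) ^ (1 / p)
        ≤ (N ^ p * ∫⁻ y, (‖φ y‖₊ : ℝ≥0∞) ^ p ∂Ωm) ^ (1 / p) :=
          ENNReal.rpow_le_rpow hyoung (by positivity)
      _ = N * (∫⁻ y, (‖φ y‖₊ : ℝ≥0∞) ^ p ∂Ωm) ^ (1 / p) := by
          rw [ENNReal.mul_rpow_of_nonneg _ _ (by positivity), ← ENNReal.rpow_mul,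
            mul_one_div_cancel hp0.ne', ENNReal.rpow_one]
  -- Lᵖ bound for w
  have hw_le : eLpNorm w P Ωm ≤ (M1 + N) * eLpNorm φ P Ωm := by
    have hsplit : w = (fun x => φ x • da x) - cv := rfl
    calc eLpNorm w P Ωm
        ≤ eLpNorm (fun x => φ x • da x) P Ωm + eLpNorm cv P Ωm := by
          rw [hsplit]
          exact eLpNorm_sub_le (hφm.smul hdam) hcvm hP1
      _ ≤ M1 * eLpNorm φ P Ωm + N * eLpNorm φ P Ωm := add_le_add hsmul_le hcv_le
      _ = (M1 + N) * eLpNorm φ P Ωm := (add_mul _ _ _).symm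
  -- lintegral representations
  have hrepφ : ∫⁻ x, (‖φ x‖₊ : ℝ≥0∞) ^ p ∂Ωm = (eLpNorm φ P Ωm) ^ p := by
    rw [eLpNorm_eq_lintegral_rpow_enorm_toReal hP0 hPtop, hPtoReal, ← ENNReal.rpow_mul,
      one_div_mul_cancel hp0.ne', ENNReal.rpow_one]
    rfl
  have hrepw : ∫⁻ x, (‖w x‖₊ : ℝ≥0∞) ^ p ∂Ωm = (eLpNorm w P Ωm) ^ p := by
    rw [eLpNorm_eq_lintegral_rpow_enorm_toReal hP0 hPtop, hPtoReal, ← ENNReal.rpow_mul,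
      one_div_mul_cancel hp0.ne', ENNReal.rpow_one]
    rfl
  have hrepdφ : ∫⁻ x, (‖dφ x‖₊ : ℝ≥0∞) ^ p ∂Ωm = (eLpNorm dφ P Ωm) ^ p := by
    rw [eLpNorm_eq_lintegral_rpow_enorm_toReal hP0 hPtop, hPtoReal, ← ENNReal.rpow_mul,
      one_div_mul_cancel hp0.ne', ENNReal.rpow_one]
    rfl
  have hrepdμ : ∫⁻ x, (‖dμ x‖₊ : ℝ≥0∞) ^ p ∂Ωm = (eLpNorm dμ P Ωm) ^ p := by
    rw [eLpNorm_eq_lintegral_rpow_enorm_toReal hP0 hPtop, hPtoReal, ← ENNReal.rpow_mul,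
      one_div_mul_cancel hp0.ne', ENNReal.rpow_one]
    rfl
  have hφfin : ∫⁻ x, (‖φ x‖₊ : ℝ≥0∞) ^ p ∂Ωm ≠ ∞ := by
    rw [hrepφ]; exact (ENNReal.rpow_lt_top_of_nonneg hp0.le hφ.2.ne).ne
  have hdφfin : ∫⁻ x, (‖dφ x‖₊ : ℝ≥0∞) ^ p ∂Ωm ≠ ∞ := by
    rw [hrepdφ]; exact (ENNReal.rpow_lt_top_of_nonneg hp0.le hdφ.2.ne).ne
  have hdμfin : ∫⁻ x, (‖dμ x‖₊ : ℝ≥0∞) ^ p ∂Ωm ≠ ∞ := by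
    rw [hrepdμ]; exact (ENNReal.rpow_lt_top_of_nonneg hp0.le hdμ.2.ne).ne
  have hMN : (M1 + N) ^ p ≠ ∞ :=
    ENNReal.rpow_ne_top_of_nonneg hp0.le (ENNReal.add_ne_top.mpr ⟨hM1fin, hNfin⟩)
  have hLw : ∫⁻ x, (‖w x‖₊ : ℝ≥0∞) ^ p ∂Ωm
      ≤ (M1 + N) ^ p * ∫⁻ x, (‖φ x‖₊ : ℝ≥0∞) ^ p ∂Ωm := by
    rw [hrepw, hrepφ]
    calc (eLpNorm w P Ωm) ^ p ≤ ((M1 + N) * eLpNorm φ P Ωm) ^ p :=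
          ENNReal.rpow_le_rpow hw_le hp0.le
      _ = (M1 + N) ^ p * (eLpNorm φ P Ωm) ^ p :=
          ENNReal.mul_rpow_of_nonneg _ _ hp0.le
  -- pointwise estimate
  have hpt : ∀ᵐ x ∂Ωm, C₀ / 4 * ‖dφ x‖ ^ p
      ≤ 2 ^ (p - 1) * K * ‖dμ x‖ ^ p + K * ‖w x‖ ^ p := by
    filter_upwards [hident, hφran, hcoer] with x hid hxr hcx
    set A : ℝ := (∫ y in Ω, J (x - y)) + F'' (φ x) with hA_def
    have hA : C₀ ≤ A := hcx _ hxr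
    have hApos : 0 < A := lt_of_lt_of_le hC₀ hA
    have hAd : dμ x - w x = A • dφ x := by
      simp only [hw_def, hda_def, hcv_def]
      rw [hid]
      abel
    have hbase : C₀ * ‖dφ x‖ ≤ ‖dμ x‖ + ‖w x‖ := by
      calc C₀ * ‖dφ x‖ ≤ A * ‖dφ x‖ := mul_le_mul_of_nonneg_right hA (norm_nonneg _)
        _ = ‖A • dφ x‖ := by rw [norm_smul, Real.norm_eq_abs, abs_of_pos hApos]
        _ = ‖dμ x - w x‖ := by rw [hAd]
        _ ≤ ‖dμ x‖ + ‖w x‖ := norm_sub_le _ _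
    have hmul : C₀ * ‖dφ x‖ ^ p ≤ ‖dμ x‖ * ‖dφ x‖ ^ (p - 1) + ‖w x‖ * ‖dφ x‖ ^ (p - 1) := by
      have h1 : C₀ * ‖dφ x‖ ^ p = C₀ * ‖dφ x‖ * ‖dφ x‖ ^ (p - 1) := by
        rw [mul_assoc, self_mul_rpow_sub_one hp1 (norm_nonneg _)]
      rw [h1, ← add_mul]
      exact mul_le_mul_of_nonneg_right hbase (Real.rpow_nonneg (norm_nonneg _) _)
    have hy1 : ‖dμ x‖ * ‖dφ x‖ ^ (p - 1)
        ≤ 2 ^ (p - 1) * K * ‖dμ x‖ ^ p + C₀ / 4 * ‖dφ x‖ ^ p := by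
      have := young_param hp1 (by positivity : (0:ℝ) < C₀ / 4)
        (norm_nonneg (dμ x)) (norm_nonneg (dφ x))
      have hco : 1 / p * ((p - 1) / (p * (C₀ / 4))) ^ (p - 1) = 2 ^ (p - 1) * K := by
        have harg : (p - 1) / (p * (C₀ / 4)) = 2 * (2 * (p - 1) / (C₀ * p)) := by
          field_simp
          ring
        rw [harg, Real.mul_rpow (by norm_num) (by positivity), hK_def]
        ring
      rw [hco] at this
      exact this
    have hy2 : ‖w x‖ * ‖dφ x‖ ^ (p - 1) ≤ K * ‖w x‖ ^ p + C₀ / 2 * ‖dφ x‖ ^ p := by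
      have := young_param hp1 (by positivity : (0:ℝ) < C₀ / 2)
        (norm_nonneg (w x)) (norm_nonneg (dφ x))
      have hco : 1 / p * ((p - 1) / (p * (C₀ / 2))) ^ (p - 1) = K := by
        have harg : (p - 1) / (p * (C₀ / 2)) = 2 * (p - 1) / (C₀ * p) := by
          field_simp
        rw [harg, hK_def]
      rw [hco] at this
      exact this
    linarith
  -- pass to lintegrals
  have hptE : ∀ᵐ x ∂Ωm, ENNReal.ofReal (C₀ / 4) * (‖dφ x‖₊ : ℝ≥0∞) ^ p
      ≤ ENNReal.ofReal (2 ^ (p - 1) * K) * (‖dμ x‖₊ : ℝ≥0∞) ^ p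
        + ENNReal.ofReal K * (‖w x‖₊ : ℝ≥0∞) ^ p := by
    filter_upwards [hpt] with x hx
    have e1 : ∀ (c : ℝ) (v : EuclideanSpace ℝ (Fin n)), 0 ≤ c →
        ENNReal.ofReal (c * ‖v‖ ^ p) = ENNReal.ofReal c * (‖v‖₊ : ℝ≥0∞) ^ p := by
      intro c v hc
      rw [ENNReal.ofReal_mul hc, ← ENNReal.ofReal_rpow_of_nonneg (norm_nonneg _) hp0.le,
        ofReal_norm_eq_coe_nnnorm]
    calc ENNReal.ofReal (C₀ / 4) * (‖dφ x‖₊ : ℝ≥0∞) ^ p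
        = ENNReal.ofReal (C₀ / 4 * ‖dφ x‖ ^ p) := (e1 _ _ (by positivity)).symm
      _ ≤ ENNReal.ofReal (2 ^ (p - 1) * K * ‖dμ x‖ ^ p + K * ‖w x‖ ^ p) :=
          ENNReal.ofReal_le_ofReal hx
      _ = ENNReal.ofReal (2 ^ (p - 1) * K * ‖dμ x‖ ^ p)
          + ENNReal.ofReal (K * ‖w x‖ ^ p) := by
          rw [ENNReal.ofReal_add]
          · exact mul_nonneg (mul_nonneg h2p1 hKnonneg) (Real.rpow_nonneg (norm_nonneg _) _)
          · exact mul_nonneg hKnonneg (Real.rpow_nonneg (norm_nonneg _) _)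
      _ = ENNReal.ofReal (2 ^ (p - 1) * K) * (‖dμ x‖₊ : ℝ≥0∞) ^ p
          + ENNReal.ofReal K * (‖w x‖₊ : ℝ≥0∞) ^ p := by
          rw [e1 _ _ (mul_nonneg h2p1 hKnonneg), e1 _ _ hKnonneg]
  have hchain : ENNReal.ofReal (C₀ / 4) * ∫⁻ x, (‖dφ x‖₊ : ℝ≥0∞) ^ p ∂Ωm
      ≤ ENNReal.ofReal (2 ^ (p - 1) * K) * ∫⁻ x, (‖dμ x‖₊ : ℝ≥0∞) ^ p ∂Ωm
        + ENNReal.ofReal K * ∫⁻ x, (‖w x‖₊ : ℝ≥0∞) ^ p ∂Ωm := by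
    have hmμ : AEMeasurable
        (fun x => ENNReal.ofReal (2 ^ (p - 1) * K) * (‖dμ x‖₊ : ℝ≥0∞) ^ p) Ωm :=
      (hdμm.enorm.pow aemeasurable_const).const_mul _
    calc ENNReal.ofReal (C₀ / 4) * ∫⁻ x, (‖dφ x‖₊ : ℝ≥0∞) ^ p ∂Ωm
        = ∫⁻ x, ENNReal.ofReal (C₀ / 4) * (‖dφ x‖₊ : ℝ≥0∞) ^ p ∂Ωm :=
          (lintegral_const_mul' _ _ ENNReal.ofReal_ne_top).symm
      _ ≤ ∫⁻ x, (ENNReal.ofReal (2 ^ (p - 1) * K) * (‖dμ x‖₊ : ℝ≥0∞) ^ p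
          + ENNReal.ofReal K * (‖w x‖₊ : ℝ≥0∞) ^ p) ∂Ωm := lintegral_mono_ae hptE
      _ = (∫⁻ x, ENNReal.ofReal (2 ^ (p - 1) * K) * (‖dμ x‖₊ : ℝ≥0∞) ^ p ∂Ωm)
          + ∫⁻ x, ENNReal.ofReal K * (‖w x‖₊ : ℝ≥0∞) ^ p ∂Ωm := lintegral_add_left' hmμ _
      _ = ENNReal.ofReal (2 ^ (p - 1) * K) * (∫⁻ x, (‖dμ x‖₊ : ℝ≥0∞) ^ p ∂Ωm)
          + ENNReal.ofReal K * ∫⁻ x, (‖w x‖₊ : ℝ≥0∞) ^ p ∂Ωm := by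
          rw [lintegral_const_mul' _ _ ENNReal.ofReal_ne_top,
            lintegral_const_mul' _ _ ENNReal.ofReal_ne_top]
  have hchain2 : ENNReal.ofReal (C₀ / 4) * ∫⁻ x, (‖dφ x‖₊ : ℝ≥0∞) ^ p ∂Ωm
      ≤ ENNReal.ofReal (2 ^ (p - 1) * K) * ∫⁻ x, (‖dμ x‖₊ : ℝ≥0∞) ^ p ∂Ωm
        + ENNReal.ofReal K * ((M1 + N) ^ p * ∫⁻ x, (‖φ x‖₊ : ℝ≥0∞) ^ p ∂Ωm) :=
    hchain.trans (add_le_add_right (mul_le_mul_right hLw _) _)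
  -- convert the real integrals
  have hIdφ : ∫ x in Ω, ‖dφ x‖ ^ p = (∫⁻ x, (‖dφ x‖₊ : ℝ≥0∞) ^ p ∂Ωm).toReal :=
    integral_norm_rpow_eq Ωm hdφm hp0
  have hIdμ : ∫ x in Ω, ‖dμ x‖ ^ p = (∫⁻ x, (‖dμ x‖₊ : ℝ≥0∞) ^ p ∂Ωm).toReal :=
    integral_norm_rpow_eq Ωm hdμm hp0
  have hIφ : ∫ x in Ω, |φ x| ^ p = (∫⁻ x, (‖φ x‖₊ : ℝ≥0∞) ^ p ∂Ωm).toReal := by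
    simp only [← Real.norm_eq_abs]
    exact integral_norm_rpow_eq Ωm hφm hp0
  rw [hIdφ, hIdμ, hIφ]
  -- take `toReal` of the ENNReal chain
  have hRHSfin : ENNReal.ofReal (2 ^ (p - 1) * K) * (∫⁻ x, (‖dμ x‖₊ : ℝ≥0∞) ^ p ∂Ωm)
      + ENNReal.ofReal K * ((M1 + N) ^ p * ∫⁻ x, (‖φ x‖₊ : ℝ≥0∞) ^ p ∂Ωm) ≠ ∞ := by
    apply ENNReal.add_ne_top.mpr
    constructor
    · exact ENNReal.mul_ne_top ENNReal.ofReal_ne_top hdμfin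
    · exact ENNReal.mul_ne_top ENNReal.ofReal_ne_top (ENNReal.mul_ne_top hMN hφfin)
  have hreal := ENNReal.toReal_mono hRHSfin hchain2
  have hMreal : ((M1 + N) ^ p).toReal = (M1.toReal + ∫ x, ‖Jgrad x‖) ^ p := by
    rw [← ENNReal.toReal_rpow]
    congr 1
    rw [ENNReal.toReal_add hM1fin hNfin, hNeq, ENNReal.toReal_ofReal hM2nonneg]
  rw [ENNReal.toReal_mul, ENNReal.toReal_ofReal (by positivity : (0:ℝ) ≤ C₀ / 4),
    ENNReal.toReal_add (ENNReal.mul_ne_top ENNReal.ofReal_ne_top hdμfin)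
      (ENNReal.mul_ne_top ENNReal.ofReal_ne_top (ENNReal.mul_ne_top hMN hφfin)),
    ENNReal.toReal_mul, ENNReal.toReal_mul, ENNReal.toReal_mul,
    ENNReal.toReal_ofReal (mul_nonneg h2p1 hKnonneg), ENNReal.toReal_ofReal hKnonneg,
    hMreal] at hreal
  calc C₀ / 4 * (∫⁻ x, (‖dφ x‖₊ : ℝ≥0∞) ^ p ∂Ωm).toReal
      ≤ 2 ^ (p - 1) * K * (∫⁻ x, (‖dμ x‖₊ : ℝ≥0∞) ^ p ∂Ωm).toReal
        + K * ((M1.toReal + ∫ x, ‖Jgrad x‖) ^ p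
          * (∫⁻ x, (‖φ x‖₊ : ℝ≥0∞) ^ p ∂Ωm).toReal) := hreal
    _ = 1 / p * (2 * (p - 1) / (C₀ * p)) ^ (p - 1) *
        (2 ^ (p - 1) * (∫⁻ x, (‖dμ x‖₊ : ℝ≥0∞) ^ p ∂Ωm).toReal
          + (M1.toReal + ∫ x, ‖Jgrad x‖) ^ p
            * (∫⁻ x, (‖φ x‖₊ : ℝ≥0∞) ^ p ∂Ωm).toReal) := by
        rw [hK_def]; ring
end
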